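/- arXiv:2104.01442 — 5 statements merged into one kernel-verified Lean document; each statement's English description precedes it below -/
import Mathlib

section
/- Let a > 0 and let c, y satisfy x̲ ≤ c ≤ y ≤ x̄, and suppose the flow π_r x is defined (stays in [x̲, 2x̄]) for all r ∈ [0, a] and x ∈ [c, 2y]. Then for every integrable function f : [c, y] → ℝ one has ∫_c^y f(x) dx = ∫_{S_a(c)}^{S_a(y)} (2 g(π_{−a}(2x)) / g(2x)) · f(π_{−a}(2x)) dx. In other words, the Frobenius–Perron operator of the map S_a (describing the passage from mother initial size to daughter initial size at division age a) is given by P_a f(x) = (2 g(π_{−a}(2x)) / g(2x)) · f(π_{−a}(2x)) on the image interval [S_a(c), S_a(y)]. -/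
open MeasureTheory Topology

/-- Spatial derivative of the flow: `d/dx (fl b x) = g (fl b x) / g x`. -/
theorem flow_spatial_deriv
    (g : ℝ → ℝ) (hg : ContDiff ℝ 1 g)
    (fl : ℝ → ℝ → ℝ)
    (hfl0 : ∀ x, fl 0 x = x)
    (hfladd : ∀ s t x, fl s (fl t x) = fl (s + t) x)
    (hflderiv : ∀ a x, HasDerivAt (fun s => fl s x) (g (fl a x)) a)
    (b t : ℝ) (hgt : g t ≠ 0) :
    HasDerivAt (fun x => fl b x) (g (fl b t) * (g t)⁻¹) t := by
  have hF : HasStrictDerivAt (fun s => fl s t) (g t) 0 := by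
    have := hasStrictDerivAt_of_hasDerivAt_of_continuousAt (f := fun s => fl s t)
      (f' := fun s => g (fl s t)) (x := 0)
      (Filter.Eventually.of_forall fun s => hflderiv s t)
      ((hg.continuous.continuousAt).comp (hflderiv 0 t).continuousAt)
    simpa [hfl0] using this
  set σ := hF.localInverse _ _ _ hgt with hσdef
  have hσt : σ t = 0 := by
    have := (hF.hasStrictFDerivAt_equiv hgt).localInverse_apply_image
    simpa [hfl0] using this
  have hσ : HasDerivAt σ (g t)⁻¹ t := by
    have := (hF.to_localInverse hgt).hasDerivAt
    simpa [hfl0] using this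
  have hrinv : ∀ᶠ x in 𝓝 t, fl (σ x) t = x := by
    have := (hF.hasStrictFDerivAt_equiv hgt).eventually_right_inverse
    simpa [hfl0] using this
  have hG : HasDerivAt (fun x => fl (b + σ x) t) (g (fl b t) * (g t)⁻¹) t := by
    have h1 : HasDerivAt (fun s => fl s t) (g (fl b t)) (b + σ t) := by
      rw [hσt, add_zero]; exact hflderiv b t
    have h2 : HasDerivAt (fun x => b + σ x) (g t)⁻¹ t := hσ.const_add b
    exact h1.comp t h2
  refine hG.congr_of_eventuallyEq ?_
  filter_upwards [hrinv] with x hx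
  conv_lhs => rw [← hx, hfladd]

/-- change of variables for the Frobenius–Perron operator of
`S_a(x) = ½ π_a x`.  Here `fl r x` denotes the flow `π_r x` of the ODE `x' = g(x)`. -/
theorem frobenius_perron_change_of_variables
    (xl xu : ℝ) (hxl : 0 < xl) (hxu : xl < xu)
    (g : ℝ → ℝ) (hg : ContDiff ℝ 1 g)
    (hgpos : ∀ x ∈ Set.Icc xl (2 * xu), 0 < g x)
    (fl : ℝ → ℝ → ℝ)
    (hfl0 : ∀ x, fl 0 x = x)
    (hfladd : ∀ s t x, fl s (fl t x) = fl (s + t) x)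
    (hflderiv : ∀ a x, HasDerivAt (fun s => fl s x) (g (fl a x)) a)
    (a : ℝ) (ha : 0 < a)
    (c y : ℝ) (hc : xl ≤ c) (hcy : c ≤ y) (hy : y ≤ xu)
    (hdom : ∀ r ∈ Set.Icc (0 : ℝ) a, ∀ x ∈ Set.Icc c (2 * y),
      fl r x ∈ Set.Icc xl (2 * xu))
    (f : ℝ → ℝ) (hf : IntervalIntegrable f volume c y) :
    ∫ x in c..y, f x
      = ∫ x in (fl a c / 2)..(fl a y / 2),
          2 * g (fl (-a) (2 * x)) / g (2 * x) * f (fl (-a) (2 * x)) := by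
  have hmem : ∀ t ∈ Set.Icc c y, t ∈ Set.Icc c (2 * y) := by
    intro t ht
    exact ⟨ht.1, ht.2.trans (by nlinarith [ht.1, hc])⟩
  have hgt : ∀ t ∈ Set.Icc c y, 0 < g t := by
    intro t ht
    have := hdom 0 ⟨le_refl 0, ha.le⟩ t (hmem t ht)
    rw [hfl0] at this
    exact hgpos t this
  have hgat : ∀ t ∈ Set.Icc c y, 0 < g (fl a t) := by
    intro t ht
    exact hgpos _ (hdom a ⟨ha.le, le_refl a⟩ t (hmem t ht))
  set φ : ℝ → ℝ := fun t => fl a t / 2 with hφdef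
  set φ' : ℝ → ℝ := fun t => g (fl a t) * (g t)⁻¹ / 2 with hφ'def
  have hφderiv : ∀ t ∈ Set.Icc c y, HasDerivAt φ (φ' t) t := by
    intro t ht
    exact (flow_spatial_deriv g hg fl hfl0 hfladd hflderiv a t (hgt t ht).ne').div_const 2
  have hφ'pos : ∀ t ∈ Set.Icc c y, 0 < φ' t := by
    intro t ht
    have := hgt t ht; have := hgat t ht
    positivity
  have hcont : ContinuousOn φ (Set.Icc c y) := fun t ht =>
    (hφderiv t ht).continuousAt.continuousWithinAt
  have hmono : StrictMonoOn φ (Set.Icc c y) := by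
    apply strictMonoOn_of_hasDerivWithinAt_pos (f' := φ') (convex_Icc c y) hcont
    · intro t ht
      exact ((hφderiv t (interior_subset ht)).hasDerivWithinAt)
    · intro t ht
      exact hφ'pos t (interior_subset ht)
  have himg : φ '' Set.Icc c y = Set.Icc (φ c) (φ y) := by
    apply Set.Subset.antisymm
    · rintro x ⟨t, ht, rfl⟩
      exact ⟨(hmono.monotoneOn) (Set.left_mem_Icc.2 hcy) ht ht.1,
        (hmono.monotoneOn) ht (Set.right_mem_Icc.2 hcy) ht.2⟩
    · exact intermediate_value_Icc hcy hcont
  have hφle : φ c ≤ φ y := (hmono.monotoneOn) (Set.left_mem_Icc.2 hcy)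
    (Set.right_mem_Icc.2 hcy) hcy
  set H : ℝ → ℝ := fun x => 2 * g (fl (-a) (2 * x)) / g (2 * x) * f (fl (-a) (2 * x)) with hH
  have hchg : ∫ x in Set.Icc c y, f x
      = ∫ x in Set.Icc (φ c) (φ y), H x := by
    rw [← himg, integral_image_eq_integral_abs_deriv_smul measurableSet_Icc
      (fun t ht => (hφderiv t ht).hasDerivWithinAt) hmono.injOn H]
    apply setIntegral_congr_fun measurableSet_Icc
    intro t ht
    have h2φ : 2 * φ t = fl a t := by simp [hφdef]; ring
    have hinv : fl (-a) (fl a t) = t := by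
      rw [hfladd, neg_add_cancel, hfl0]
    have hgt' := hgt t ht
    have hgat' := hgat t ht
    simp only [hH, smul_eq_mul, h2φ, hinv, abs_of_pos (hφ'pos t ht), hφ'def]
    field_simp
    rw [abs_of_pos (show (0:ℝ) < g (fl a t) / (g t * 2) by positivity),
      show f t * g t * 2 * (g (fl a t) / (g t * 2)) = f t * g (fl a t) * ((g t * 2) / (g t * 2)) by ring,
      div_self (show g t * 2 ≠ 0 by positivity), mul_one]
  rw [intervalIntegral.integral_of_le hcy, intervalIntegral.integral_of_le hφle,
    ← integral_Icc_eq_integral_Ioc, ← integral_Icc_eq_integral_Ioc]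
  exact hchg
end

section
/- Let X = {(x_b, a) : x̲ ≤ x_b ≤ x̄, 0 ≤ a ≤ ā(x_b)}. Let f : X → ℝ be continuous with continuous partial derivative ∂f/∂a and f(x_b, ā(x_b)) = 0 for all x_b, and let φ : X → ℝ be continuous with continuous ∂φ/∂a satisfying the boundary condition φ(x_b, 0) = ∫_0^∞ 2 (P_a(q(·, a) φ(·, a)))(x_b) da for almost every x_b ∈ [x̲, x̄]. Then −∬_X f(x_b, a) (∂φ/∂a)(x_b, a) da dx_b = ∬_X [ (∂f/∂a)(x_b, a) + 2 q(x_b, a) f(S_a(x_b), 0) ] φ(x_b, a) da dx_b. -/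
open MeasureTheory Set Filter

/-- Once the flow of `x' = g(x)` strictly exceeds a level `c` with `g c > 0`,
it never comes back to or below `c`. -/
lemma flow_no_return {g : ℝ → ℝ} {fl : ℝ → ℝ → ℝ}
    (hflderiv : ∀ a x, HasDerivAt (fun s => fl s x) (g (fl a x)) a)
    {c : ℝ} (hgc : 0 < g c) {y u t : ℝ} (h : c < fl u y) (hut : u ≤ t) :
    c < fl t y := by
  by_contra hle
  push_neg at hle
  have hcont : Continuous (fun s => fl s y) :=
    continuous_iff_continuousAt.2 fun s => (hflderiv s y).continuousAt
  have hut' : u < t := by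
    rcases eq_or_lt_of_le hut with rfl | h'
    · exact absurd hle (not_le.2 h)
    · exact h'
  set A : Set ℝ := Icc u t ∩ (fun s => fl s y) ⁻¹' Iic c with hA
  have hAne : A.Nonempty := ⟨t, ⟨le_of_lt hut', le_refl t⟩, hle⟩
  have hAclosed : IsClosed A := isClosed_Icc.inter (isClosed_Iic.preimage hcont)
  have hAbdd : BddBelow A := ⟨u, fun s hs => hs.1.1⟩
  set σ := sInf A with hσ
  have hσA : σ ∈ A := hAclosed.csInf_mem hAne hAbdd
  have hσu : u < σ := by
    rcases lt_or_eq_of_le hσA.1.1 with h' | h'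
    · exact h'
    · exact absurd (h' ▸ hσA.2) (not_le.2 h)
  have hbelow : ∀ s ∈ Ico u σ, c < fl s y := by
    intro s hs
    by_contra hs'
    push_neg at hs'
    have : σ ≤ s := csInf_le hAbdd ⟨⟨hs.1, le_trans hs.2.le (hσA.1.2)⟩, hs'⟩
    exact absurd hs.2 (not_lt.2 this)
  -- fl σ y = c
  have hflσc : fl σ y = c := by
    have h1 : fl σ y ≤ c := hσA.2
    have h2 : c ≤ fl σ y := by
      have : Tendsto (fun s => fl s y) (nhdsWithin σ (Iio σ)) (nhds (fl σ y)) :=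
        (hcont.tendsto σ).mono_left nhdsWithin_le_nhds
      refine ge_of_tendsto this ?_
      filter_upwards [Ico_mem_nhdsLT hσu] with s hs
      exact (hbelow s hs).le
    linarith
  -- derivative at σ is g c > 0, so slope from the left is positive: contradiction
  have hd := hflderiv σ y
  rw [hflσc] at hd
  have hslope : Tendsto (slope (fun s => fl s y) σ) (nhdsWithin σ {σ}ᶜ) (nhds (g c)) :=
    hasDerivAt_iff_tendsto_slope.1 hd
  have hslope' : Tendsto (slope (fun s => fl s y) σ) (nhdsWithin σ (Iio σ)) (nhds (g c)) :=
    hslope.mono_left (nhdsWithin_mono σ (fun s hs => ne_of_lt hs))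
  have hev : ∀ᶠ s in nhdsWithin σ (Iio σ), 0 < slope (fun s => fl s y) σ s :=
    hslope'.eventually (eventually_gt_nhds hgc)
  have hev2 : ∀ᶠ s in nhdsWithin σ (Iio σ), s ∈ Ico u σ := Ico_mem_nhdsLT hσu
  rcases (hev.and hev2).exists with ⟨s, hs1, hs2⟩
  have hne : s - σ < 0 := sub_neg.2 hs2.2
  have hsl : 0 < (s - σ)⁻¹ * (fl s y - fl σ y) := by
    simpa [slope, vsub_eq_sub] using hs1
  have hinv : (s - σ)⁻¹ < 0 := inv_lt_zero.2 hne
  have : fl s y - fl σ y < 0 := by nlinarith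
  rw [hflσc] at this
  exact absurd (hbelow s hs2) (by linarith)

/-- The flow of `x' = g(x)` started at or above a level `c` with `g c > 0`
stays at or above `c` forever (in forward time). -/
lemma flow_low_bar {g : ℝ → ℝ} {fl : ℝ → ℝ → ℝ}
    (hfl0 : ∀ x, fl 0 x = x)
    (hflderiv : ∀ a x, HasDerivAt (fun s => fl s x) (g (fl a x)) a)
    {c : ℝ} (hgc : 0 < g c) {y t : ℝ} (hy : c ≤ y) (ht : 0 ≤ t) :
    c ≤ fl t y := by
  by_contra hle
  push_neg at hle
  have hcont : Continuous (fun s => fl s y) :=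
    continuous_iff_continuousAt.2 fun s => (hflderiv s y).continuousAt
  have ht' : 0 < t := by
    rcases eq_or_lt_of_le ht with rfl | h'
    · rw [hfl0] at hle; exact absurd hy (not_le.2 hle)
    · exact h'
  set A : Set ℝ := Icc 0 t ∩ (fun s => fl s y) ⁻¹' Ici c with hA
  have hAne : A.Nonempty := ⟨0, ⟨le_refl 0, ht⟩, by simp [hfl0, hy]⟩
  have hAclosed : IsClosed A := isClosed_Icc.inter (isClosed_Ici.preimage hcont)
  have hAbdd : BddAbove A := ⟨t, fun s hs => hs.1.2⟩
  set σ := sSup A with hσ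
  have hσA : σ ∈ A := hAclosed.csSup_mem hAne hAbdd
  have hσt : σ < t := by
    rcases lt_or_eq_of_le hσA.1.2 with h' | h'
    · exact h'
    · exact absurd (h' ▸ hσA.2) (not_le.2 hle)
  have habove : ∀ s ∈ Ioc σ t, fl s y < c := by
    intro s hs
    by_contra hs'
    push_neg at hs'
    have : s ≤ σ := le_csSup hAbdd ⟨⟨le_trans hσA.1.1 hs.1.le, hs.2⟩, hs'⟩
    exact absurd hs.1 (not_lt.2 this)
  have hflσc : fl σ y = c := by
    have h1 : c ≤ fl σ y := hσA.2
    have h2 : fl σ y ≤ c := by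
      have htd : Tendsto (fun s => fl s y) (nhdsWithin σ (Ioi σ)) (nhds (fl σ y)) :=
        (hcont.tendsto σ).mono_left nhdsWithin_le_nhds
      refine le_of_tendsto htd ?_
      filter_upwards [Ioc_mem_nhdsGT hσt] with s hs
      exact (habove s hs).le
    linarith
  have hd := hflderiv σ y
  rw [hflσc] at hd
  have hslope : Tendsto (slope (fun s => fl s y) σ) (nhdsWithin σ {σ}ᶜ) (nhds (g c)) :=
    hasDerivAt_iff_tendsto_slope.1 hd
  have hslope' : Tendsto (slope (fun s => fl s y) σ) (nhdsWithin σ (Ioi σ)) (nhds (g c)) :=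
    hslope.mono_left (nhdsWithin_mono σ (fun s hs => ne_of_gt hs))
  have hev : ∀ᶠ s in nhdsWithin σ (Ioi σ), 0 < slope (fun s => fl s y) σ s :=
    hslope'.eventually (eventually_gt_nhds hgc)
  have hev2 : ∀ᶠ s in nhdsWithin σ (Ioi σ), s ∈ Ioc σ t := Ioc_mem_nhdsGT hσt
  rcases (hev.and hev2).exists with ⟨s, hs1, hs2⟩
  have hne : 0 < s - σ := sub_pos.2 hs2.1
  have hsl : 0 < (s - σ)⁻¹ * (fl s y - fl σ y) := by
    simpa [slope, vsub_eq_sub] using hs1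
  have hinv : 0 < (s - σ)⁻¹ := inv_pos.2 hne
  have : 0 < fl s y - fl σ y := by nlinarith
  rw [hflσc] at this
  exact absurd (habove s hs2) (by linarith)

set_option maxHeartbeats 2000000 in
/-- weak formulation / integration by parts on
`X = {(x_b,a) : x̲ ≤ x_b ≤ x̄, 0 ≤ a ≤ ā(x_b)}`, relating the generator `A` and its
adjoint `A*`.  `fl r x` is the flow `π_r x` of `x' = g(x)`, `S_a(x) = fl a x / 2`. -/
theorem adjoint_integration_by_parts
    (xl xu : ℝ) (hxl : 0 < xl) (hxu : xl < xu)
    (g : ℝ → ℝ) (hg : ContDiffOn ℝ 1 g (Set.Icc xl (2 * xu)))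
    (hgpos : ∀ x ∈ Set.Icc xl (2 * xu), 0 < g x)
    (fl : ℝ → ℝ → ℝ)
    (hfl0 : ∀ x, fl 0 x = x)
    (hfladd : ∀ s t x, fl s (fl t x) = fl (s + t) x)
    (hflderiv : ∀ a x, HasDerivAt (fun s => fl s x) (g (fl a x)) a)
    (q : ℝ → ℝ → ℝ)
    (hqcont : ContinuousOn (fun p : ℝ × ℝ => q p.1 p.2) (Set.Icc xl xu ×ˢ Set.univ))
    (hqnn : ∀ x a, 0 ≤ q x a)
    (al au : ℝ → ℝ)
    (halcont : ContinuousOn al (Set.Icc xl xu)) (haucont : ContinuousOn au (Set.Icc xl xu))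
    (hbounds : ∀ x ∈ Set.Icc xl xu, 0 < al x ∧ al x < au x)
    (hqdens : ∀ x ∈ Set.Icc xl xu, ∫ a, q x a = 1)
    (hqpos : ∀ x ∈ Set.Icc xl xu, ∀ a ∈ Set.Ioo (al x) (au x), 0 < q x a)
    (hqzero : ∀ x ∈ Set.Icc xl xu, ∀ a, a ∉ Set.Ioo (al x) (au x) → q x a = 0)
    (hA5 : ∀ x ∈ Set.Icc xl xu, xl ≤ fl (al x) x / 2 ∧ fl (au x) x / 2 ≤ xu)
    (X : Set (ℝ × ℝ))
    (hX : X = {p : ℝ × ℝ | xl ≤ p.1 ∧ p.1 ≤ xu ∧ 0 ≤ p.2 ∧ p.2 ≤ au p.1})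
    -- `f`, continuous with continuous `∂f/∂a`, vanishing on the upper boundary
    (f fa : ℝ → ℝ → ℝ)
    (hfcont : ContinuousOn (fun p : ℝ × ℝ => f p.1 p.2) X)
    (hfderiv : ∀ x ∈ Set.Icc xl xu, ∀ a ∈ Set.Icc 0 (au x), HasDerivAt (f x) (fa x a) a)
    (hfacont : ContinuousOn (fun p : ℝ × ℝ => fa p.1 p.2) X)
    (hfbound : ∀ x ∈ Set.Icc xl xu, f x (au x) = 0)
    -- `φ`, continuous with continuous `∂φ/∂a`, satisfying the boundary condition
    (φ φa : ℝ → ℝ → ℝ)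
    (hφcont : ContinuousOn (fun p : ℝ × ℝ => φ p.1 p.2) X)
    (hφderiv : ∀ x ∈ Set.Icc xl xu, ∀ a ∈ Set.Icc 0 (au x), HasDerivAt (φ x) (φa x a) a)
    (hφacont : ContinuousOn (fun p : ℝ × ℝ => φa p.1 p.2) X)
    (hφbound : ∀ᵐ x ∂(volume.restrict (Set.Icc xl xu)),
      φ x 0 = ∫ a in Set.Ioi (0:ℝ),
        2 * Set.indicator (Set.Icc xl xu)
          (fun z => 2 * g z / g (2 * x) * (q z a * φ z a)) (fl (-a) (2 * x))) :
    -(∫ x in xl..xu, ∫ a in (0:ℝ)..au x, f x a * φa x a)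
      = ∫ x in xl..xu, ∫ a in (0:ℝ)..au x,
          (fa x a + 2 * q x a * f (fl a x / 2) 0) * φ x a := by
  have hxl2 : xl ≤ 2 * xu := by linarith
  have h2l : xl ≤ 2 * xl := by linarith
  have h2lu : 2 * xl ≤ 2 * xu := by linarith
  -- clamp onto K = Icc xl (2*xu)
  set cl : ℝ → ℝ := fun w => min (max w xl) (2 * xu) with hcl
  have hclK : ∀ w, cl w ∈ Set.Icc xl (2 * xu) := by
    intro w
    constructor
    · exact le_min (le_max_right w xl) hxl2
    · exact min_le_right _ _
  have hclid : ∀ w ∈ Set.Icc xl (2 * xu), cl w = w := by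
    intro w hw
    simp only [hcl]
    rw [max_eq_left hw.1, min_eq_left hw.2]
  have hclcont : Continuous cl := by fun_prop
  set gt' : ℝ → ℝ := fun w => g (cl w) with hgt
  have hgtcont : Continuous gt' := hg.continuousOn.comp_continuous hclcont hclK
  have hgtpos : ∀ w, 0 < gt' w := fun w => hgpos _ (hclK w)
  have hgteq : ∀ w ∈ Set.Icc xl (2 * xu), gt' w = g w := by
    intro w hw; simp only [hgt]; rw [hclid w hw]
  have hicont : Continuous fun w => (gt' w)⁻¹ :=
    hgtcont.inv₀ fun w => (hgtpos w).ne'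
  set G : ℝ → ℝ := fun w => ∫ t in xl..w, (gt' t)⁻¹ with hGdef
  have hGd : ∀ w, HasDerivAt G ((gt' w)⁻¹) w := by
    intro w
    exact intervalIntegral.integral_hasDerivAt_right
      (hicont.intervalIntegrable _ _)
      (hicont.stronglyMeasurableAtFilter _ _)
      hicont.continuousAt
  have hGcont : Continuous G :=
    continuous_iff_continuousAt.2 fun w => (hGd w).continuousAt
  have hGsm : StrictMono G := by
    apply strictMono_of_deriv_pos
    intro w
    rw [(hGd w).deriv]
    exact inv_pos.2 (hgtpos w)
  have hGxl : G xl = 0 := intervalIntegral.integral_same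
  -- bound on gt'
  obtain ⟨Mg, hMg⟩ := isCompact_Icc.exists_bound_of_continuousOn hg.continuousOn
  have hMgpos : 0 < Mg := lt_of_lt_of_le (hgpos xl ⟨le_refl _, hxl2⟩)
      (le_trans (le_abs_self _) (hMg xl ⟨le_refl _, hxl2⟩))
  have hgtM : ∀ w, gt' w ≤ Mg := fun w =>
    le_trans (le_abs_self _) (hMg _ (hclK w))
  have hGlow : ∀ w, xl ≤ w → (w - xl) / Mg ≤ G w := by
    intro w hw
    have : ∫ t in xl..w, Mg⁻¹ ≤ G w := by
      apply intervalIntegral.integral_mono_on hw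
        (intervalIntegrable_const) (hicont.intervalIntegrable _ _)
      intro t _
      exact inv_anti₀ (hgtpos t) (hgtM t)
    simpa [intervalIntegral.integral_const, div_eq_mul_inv] using this
  have hGhigh : ∀ w, w ≤ xl → G w ≤ (w - xl) / Mg := by
    intro w hw
    have h1 : ∫ t in w..xl, Mg⁻¹ ≤ ∫ t in w..xl, (gt' t)⁻¹ := by
      apply intervalIntegral.integral_mono_on hw
        (intervalIntegrable_const) (hicont.intervalIntegrable _ _)
      intro t _
      exact inv_anti₀ (hgtpos t) (hgtM t)
    have h2 : G w = -(∫ t in w..xl, (gt' t)⁻¹) := by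
      rw [hGdef]; rw [← intervalIntegral.integral_symm]
    rw [h2]
    have h3 : (xl - w) * Mg⁻¹ ≤ ∫ t in w..xl, (gt' t)⁻¹ := by
      simpa [intervalIntegral.integral_const] using h1
    have : -(∫ t in w..xl, (gt' t)⁻¹) ≤ -((xl - w) * Mg⁻¹) := neg_le_neg h3
    calc -(∫ t in w..xl, (gt' t)⁻¹) ≤ -((xl - w) * Mg⁻¹) := this
      _ = (w - xl) / Mg := by ring
  have hGtop : Tendsto G atTop atTop := by
    apply tendsto_atTop_mono' atTop
      (eventually_atTop.2 ⟨xl, hGlow⟩)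
    exact (tendsto_atTop_add_const_right atTop (-xl) tendsto_id).atTop_div_const hMgpos
      |>.congr (by intro w; simp [id]; ring)
  have hGbot : Tendsto G atBot atBot := by
    apply tendsto_atBot_mono' atBot
      (eventually_atBot.2 ⟨xl, hGhigh⟩)
    exact ((tendsto_atBot_add_const_right atBot (-xl) tendsto_id).atBot_div_const hMgpos)
      |>.congr (by intro w; simp [id]; ring)
  have hGsurj : Function.Surjective G := hGcont.surjective hGtop hGbot
  set E := StrictMono.orderIsoOfSurjective G hGsm hGsurj with hE
  set H : ℝ → ℝ := ⇑E.symm with hH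
  have hHG : ∀ w, H (G w) = w := fun w =>
    StrictMono.orderIsoOfSurjective_symm_apply_self G hGsm hGsurj w
  have hGH : ∀ z, G (H z) = z := fun z =>
    StrictMono.orderIsoOfSurjective_self_symm_apply G hGsm hGsurj z
  have hHcont : Continuous H := OrderIso.continuous E.symm
  have hHsm : StrictMono H := E.symm.strictMono
  have hHle : ∀ {p r : ℝ}, H p ≤ H r ↔ p ≤ r := fun {p r} => E.symm.le_iff_le
  have hGle : ∀ {w w' : ℝ}, G w ≤ G w' ↔ w ≤ w' := fun {w w'} => hGsm.le_iff_le
  have hHd : ∀ z, HasDerivAt H (gt' (H z)) z := by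
    intro z
    have := HasDerivAt.of_local_left_inverse hHcont.continuousAt
      (hGd (H z)) (ne_of_gt (inv_pos.2 (hgtpos _)))
      (Filter.Eventually.of_forall hGH)
    simpa [inv_inv] using this
  -- flow facts
  have flcont : ∀ y, Continuous fun s => fl s y := fun y =>
    continuous_iff_continuousAt.2 fun s => (hflderiv s y).continuousAt
  have hgxl : 0 < g xl := hgpos xl ⟨le_refl _, hxl2⟩
  have hgxu2 : 0 < g (2 * xu) := hgpos _ ⟨hxl2, le_refl _⟩
  have LB : ∀ y t : ℝ, xl ≤ y → 0 ≤ t → xl ≤ fl t y :=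
    fun y t hy ht => flow_low_bar hfl0 hflderiv hgxl hy ht
  have NR : ∀ y u t : ℝ, 2 * xu < fl u y → u ≤ t → 2 * xu < fl t y :=
    fun y u t h hut => flow_no_return hflderiv hgxu2 h hut
  set L : ℝ := G (2 * xu) with hL
  have RHO : ∀ y T : ℝ, 0 ≤ T → (∀ s ∈ Set.Icc 0 T, fl s y ∈ Set.Icc xl (2 * xu)) →
      G (fl T y) = G y + T := by
    intro y T hT hgood
    have key : ∀ s ∈ Set.Icc 0 T, (fun s => G (fl s y) - s) s = (fun s => G (fl s y) - s) 0 := by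
      apply constant_of_has_deriv_right_zero
      · exact ((hGcont.comp (flcont y)).sub continuous_id).continuousOn
      · intro s hs
        have hd1 : HasDerivAt (fun s => G (fl s y)) ((gt' (fl s y))⁻¹ * g (fl s y)) s :=
          by have := (hGd (fl s y)).comp (x := s) (hflderiv s y); exact this
        have : (gt' (fl s y))⁻¹ * g (fl s y) = 1 := by
          rw [hgteq _ (hgood s (Set.mem_Icc_of_Ico hs))]
          exact inv_mul_cancel₀ (ne_of_gt (hgpos _ (hgood s (Set.mem_Icc_of_Ico hs))))
        rw [this] at hd1
        have hd2 : HasDerivAt (fun s => G (fl s y) - s) 0 s := by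
          have := hd1.sub (hasDerivAt_id' s); rw [sub_self] at this; exact this
        exact hd2.hasDerivWithinAt
    have := key T ⟨hT, le_refl T⟩
    simp only [hfl0] at this
    linarith [this]
  have UPPER : ∀ y ∈ Set.Icc xl (2 * xu), ∀ t, 0 ≤ t → G y + t ≤ L →
      ∀ s ∈ Set.Icc 0 t, fl s y ≤ 2 * xu := by
    intro y hy t ht hGt s hs
    by_contra hs'
    push_neg at hs'
    set B : Set ℝ := Set.Icc 0 s ∩ (fun u => fl u y) ⁻¹' Set.Ioi (2 * xu) with hB
    have hBne : B.Nonempty := ⟨s, ⟨hs.1, le_refl s⟩, hs'⟩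
    have hBbdd : BddBelow B := ⟨0, fun u hu => hu.1.1⟩
    set σ := sInf B with hσ
    have hσ0 : 0 ≤ σ := le_csInf hBne fun u hu => hu.1.1
    have hσs : σ ≤ s := csInf_le hBbdd ⟨⟨hs.1, le_refl s⟩, hs'⟩
    have hbelow : ∀ u, 0 ≤ u → u < σ → fl u y ≤ 2 * xu := by
      intro u hu huσ
      by_contra hu'
      push_neg at hu'
      have : σ ≤ u := csInf_le hBbdd ⟨⟨hu, le_trans huσ.le hσs⟩, hu'⟩
      exact absurd huσ (not_lt.2 this)
    -- fl σ y ≤ 2 xu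
    have hσle : fl σ y ≤ 2 * xu := by
      by_contra hgt2
      push_neg at hgt2
      rcases eq_or_lt_of_le hσ0 with h0 | h0
      · rw [← h0, hfl0] at hgt2
        exact absurd hy.2 (not_le.2 hgt2)
      · have hev : ∀ᶠ u in nhdsWithin σ (Set.Iio σ), 2 * xu < fl u y :=
          (((flcont y).tendsto σ).mono_left nhdsWithin_le_nhds).eventually
            (eventually_gt_nhds hgt2)
        have hev2 : ∀ᶠ u in nhdsWithin σ (Set.Iio σ), u ∈ Set.Ico 0 σ :=
          Ico_mem_nhdsLT h0
        rcases (hev.and hev2).exists with ⟨u, hu1, hu2⟩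
        exact absurd (hbelow u hu2.1 hu2.2) (not_le.2 hu1)
    have hσge : 2 * xu ≤ fl σ y := by
      by_contra hlt
      push_neg at hlt
      have hev : ∀ᶠ u in nhds σ, fl u y < 2 * xu :=
        ((flcont y).tendsto σ).eventually (eventually_lt_nhds hlt)
      rcases Metric.eventually_nhds_iff.1 hev with ⟨δ, hδ, hball⟩
      have : sInf B < σ + δ := lt_of_le_of_lt (le_refl _) (by linarith)
      rcases exists_lt_of_csInf_lt hBne this with ⟨b, hbB, hbδ⟩
      have hσb : σ ≤ b := csInf_le hBbdd hbB
      have : dist b σ < δ := by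
        rw [Real.dist_eq, abs_of_nonneg (by linarith)]
        linarith
      exact absurd hbB.2 (not_lt.2 (le_of_lt (hball this)))
    have hflσ : fl σ y = 2 * xu := le_antisymm hσle hσge
    have hgoodσ : ∀ u ∈ Set.Icc 0 σ, fl u y ∈ Set.Icc xl (2 * xu) := by
      intro u hu
      refine ⟨LB y u hy.1 hu.1, ?_⟩
      rcases eq_or_lt_of_le hu.2 with h' | h'
      · rw [h', hflσ]
      · exact hbelow u hu.1 h'
    have hGσ : G (fl σ y) = G y + σ := RHO y σ hσ0 hgoodσ
    rw [hflσ] at hGσ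
    -- σ = L - G y  ≥ t, but σ ≤ s ≤ t and σ ≠ s
    have hσt : t ≤ σ := by
      have : G y + t ≤ G y + σ := by rw [← hGσ]; exact hGt
      linarith
    have hne : σ ≠ s := by
      intro h
      rw [← h, hflσ] at hs'
      exact lt_irrefl _ hs'
    have : σ < s := lt_of_le_of_ne hσs hne
    linarith [hs.2]
  have FF : ∀ y ∈ Set.Icc xl (2 * xu), ∀ t, 0 ≤ t → G y + t ≤ L →
      (∀ s ∈ Set.Icc 0 t, fl s y ∈ Set.Icc xl (2 * xu)) ∧ fl t y = H (G y + t) := by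
    intro y hy t ht hGt
    have hgood : ∀ s ∈ Set.Icc 0 t, fl s y ∈ Set.Icc xl (2 * xu) := fun s hs =>
      ⟨LB y s hy.1 hs.1, UPPER y hy t ht hGt s hs⟩
    refine ⟨hgood, ?_⟩
    have := RHO y t ht hgood
    rw [← this, hHG]
  have TIME : ∀ z ∈ Set.Icc xl (2 * xu), ∀ a, 0 ≤ a → fl a z ≤ 2 * xu →
      G z + a ≤ L ∧ fl a z = H (G z + a) := by
    intro z hz a ha hfla
    by_cases h : G z + a ≤ L
    · exact ⟨h, (FF z hz a ha h).2⟩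
    · exfalso
      push_neg at h
      set t1 : ℝ := L - G z with ht1def
      have ht1 : 0 ≤ t1 := by
        have : G z ≤ L := hGsm.monotone hz.2
        linarith
      have ht1a : t1 < a := by linarith
      have hflt1 : fl t1 z = 2 * xu := by
        have := (FF z hz t1 ht1 (by linarith)).2
        rw [this, ht1def]
        have : G z + (L - G z) = L := by ring
        rw [this, hL, hHG]
      have hd := hflderiv t1 z
      rw [hflt1] at hd
      have hslope : Tendsto (slope (fun s => fl s z) t1) (nhdsWithin t1 {t1}ᶜ)
          (nhds (g (2 * xu))) := hasDerivAt_iff_tendsto_slope.1 hd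
      have hslope' : Tendsto (slope (fun s => fl s z) t1) (nhdsWithin t1 (Set.Ioi t1))
          (nhds (g (2 * xu))) :=
        hslope.mono_left (nhdsWithin_mono t1 (fun s hs => ne_of_gt hs))
      have hev : ∀ᶠ s in nhdsWithin t1 (Set.Ioi t1),
          0 < slope (fun s => fl s z) t1 s :=
        hslope'.eventually (eventually_gt_nhds hgxu2)
      have hev2 : ∀ᶠ s in nhdsWithin t1 (Set.Ioi t1), s ∈ Set.Ioc t1 a :=
        Ioc_mem_nhdsGT ht1a
      rcases (hev.and hev2).exists with ⟨s, hs1, hs2⟩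
      have hpos : 0 < s - t1 := sub_pos.2 hs2.1
      have hsl : 0 < (s - t1)⁻¹ * (fl s z - fl t1 z) := by
        simpa [slope, vsub_eq_sub] using hs1
      have : 0 < fl s z - fl t1 z := by nlinarith [inv_pos.2 hpos]
      rw [hflt1] at this
      have h2 : 2 * xu < fl s z := by linarith
      have := NR z s a h2 hs2.2
      linarith
  have AUB : ∀ y ∈ Set.Icc xl xu, G y + au y ≤ L ∧
      (∀ a ∈ Set.Icc 0 (au y), fl a y = H (G y + a)) ∧ G (2 * xl) ≤ G y + al y := by
    intro y hy
    have hyK : y ∈ Set.Icc xl (2 * xu) := ⟨hy.1, le_trans hy.2 (by linarith)⟩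
    have hal := (hbounds y hy).1
    have hau : 0 < au y := lt_trans hal (hbounds y hy).2
    have hfla : fl (au y) y ≤ 2 * xu := by
      have := (hA5 y hy).2; linarith
    have h1 := TIME y hyK (au y) hau.le hfla
    have h2 : ∀ a ∈ Set.Icc 0 (au y), fl a y = H (G y + a) := by
      intro a ha
      exact (FF y hyK a ha.1 (by linarith [h1.1, ha.2])).2
    refine ⟨h1.1, h2, ?_⟩
    have h3 : fl (al y) y = H (G y + al y) :=
      h2 (al y) ⟨hal.le, (hbounds y hy).2.le⟩
    have h4 : 2 * xl ≤ fl (al y) y := by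
      have := (hA5 y hy).1; linarith
    rw [h3] at h4
    have := hGsm.monotone h4
    rw [hGH] at this
    exact this
  have BF : ∀ w ∈ Set.Icc xl (2 * xu), ∀ a, 0 ≤ a → a ≤ G w →
      fl (-a) w = H (G w - a) := by
    intro w hw a ha haG
    set z : ℝ := H (G w - a) with hz
    have hzK : z ∈ Set.Icc xl (2 * xu) := by
      constructor
      · have : G xl ≤ G w - a := by rw [hGxl]; linarith
        have := hHsm.monotone this
        rwa [hHG] at this
      · have : G w - a ≤ G (2 * xu) := by
          have : G w ≤ G (2 * xu) := hGsm.monotone hw.2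
          linarith
        have := hHsm.monotone this
        rwa [hHG] at this
    have hGz : G z + a = G w := by rw [hz, hGH]; ring
    have hfl : fl a z = w := by
      have := (FF z hzK a ha (by rw [hGz]; exact hGsm.monotone hw.2)).2
      rw [hGz] at this
      rw [this, hHG]
    calc fl (-a) w = fl (-a) (fl a z) := by rw [hfl]
      _ = fl (-a + a) z := hfladd _ _ _
      _ = z := by rw [neg_add_cancel, hfl0]
  have CHARmem : ∀ x ∈ Set.Icc xl xu, ∀ a, 0 ≤ a →
      (fl (-a) (2 * x) ∈ Set.Icc xl xu ↔ (G (2 * x) - G xu ≤ a ∧ a ≤ G (2 * x))) := by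
    intro x hx a ha
    have h2xK : (2 : ℝ) * x ∈ Set.Icc xl (2 * xu) := ⟨by nlinarith [hx.1], by linarith [hx.2]⟩
    constructor
    · intro hmem
      have hwK : fl (-a) (2 * x) ∈ Set.Icc xl (2 * xu) :=
        ⟨hmem.1, le_trans hmem.2 (by linarith)⟩
      have hflb : fl a (fl (-a) (2 * x)) = 2 * x := by
        rw [hfladd, add_neg_cancel, hfl0]
      have := TIME _ hwK a ha (by rw [hflb]; linarith [hx.2])
      have heq : 2 * x = H (G (fl (-a) (2 * x)) + a) := by rw [← this.2, hflb]
      have heq2 : G (2 * x) = G (fl (-a) (2 * x)) + a := by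
        conv_lhs => rw [heq]
        rw [hGH]
      constructor
      · have : G (fl (-a) (2 * x)) ≤ G xu := hGsm.monotone hmem.2
        linarith
      · have : G xl ≤ G (fl (-a) (2 * x)) := hGsm.monotone hmem.1
        rw [hGxl] at this
        linarith
    · rintro ⟨h1, h2⟩
      rw [BF _ h2xK a ha h2]
      constructor
      · have : G xl ≤ G (2 * x) - a := by rw [hGxl]; linarith
        have := hHsm.monotone this
        rwa [hHG] at this
      · have : G (2 * x) - a ≤ G xu := by linarith
        have := hHsm.monotone this
        rwa [hHG] at this
  have CHARval : ∀ x ∈ Set.Icc xl xu, ∀ a, 0 ≤ a → a ≤ G (2 * x) →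
      fl (-a) (2 * x) = H (G (2 * x) - a) := by
    intro x hx a ha h2
    have h2xK : (2 : ℝ) * x ∈ Set.Icc xl (2 * xu) := ⟨by nlinarith [hx.1], by linarith [hx.2]⟩
    exact BF _ h2xK a ha h2
  -- extended au, and basic sets
  set auE : ℝ → ℝ := fun w => au (min (max w xl) xu) with hauE
  have hclI : ∀ w, (min (max w xl) xu) ∈ Set.Icc xl xu := by
    intro w
    constructor
    · exact le_min (le_max_right w xl) hxu.le
    · exact min_le_right _ _
  have hauEcont : Continuous auE := by
    apply haucont.comp_continuous (by fun_prop) hclI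
  have hauEeq : ∀ w ∈ Set.Icc xl xu, auE w = au w := by
    intro w hw
    simp only [hauE]
    rw [max_eq_left hw.1, min_eq_left hw.2]
  obtain ⟨Au, hAu⟩ := isCompact_Icc.exists_bound_of_continuousOn haucont
  have hAu' : ∀ y ∈ Set.Icc xl xu, au y ≤ Au := fun y hy =>
    le_trans (le_abs_self _) (hAu y hy)
  have hXclosed : IsClosed X := by
    rw [hX]
    have : {p : ℝ × ℝ | xl ≤ p.1 ∧ p.1 ≤ xu ∧ 0 ≤ p.2 ∧ p.2 ≤ au p.1}
        = {p : ℝ × ℝ | xl ≤ p.1} ∩ {p | p.1 ≤ xu} ∩ {p | 0 ≤ p.2} ∩ {p | p.2 ≤ auE p.1} := by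
      ext p
      simp only [Set.mem_setOf_eq, Set.mem_inter_iff]
      constructor
      · rintro ⟨h1, h2, h3, h4⟩
        exact ⟨⟨⟨h1, h2⟩, h3⟩, by rw [hauEeq p.1 ⟨h1, h2⟩]; exact h4⟩
      · rintro ⟨⟨⟨h1, h2⟩, h3⟩, h4⟩
        refine ⟨h1, h2, h3, ?_⟩
        rw [← hauEeq p.1 ⟨h1, h2⟩]; exact h4
    rw [this]
    refine (((isClosed_le continuous_const continuous_fst).inter
      (isClosed_le continuous_fst continuous_const)).inter
      (isClosed_le continuous_const continuous_snd)).inter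
      (isClosed_le continuous_snd (hauEcont.comp continuous_fst))
  have hXsub : X ⊆ Set.Icc xl xu ×ˢ Set.Icc 0 Au := by
    rw [hX]
    rintro p ⟨h1, h2, h3, h4⟩
    exact ⟨⟨h1, h2⟩, ⟨h3, le_trans h4 (hAu' p.1 ⟨h1, h2⟩)⟩⟩
  have hXcompact : IsCompact X :=
    (isCompact_Icc.prod isCompact_Icc).of_isClosed_subset hXclosed hXsub
  have hXmem : ∀ x ∈ Set.Icc xl xu, ∀ a, 0 ≤ a → a ≤ au x → (x, a) ∈ X := by
    intro x hx a h0 h1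
    rw [hX]; exact ⟨hx.1, hx.2, h0, h1⟩
  have hau0 : ∀ x ∈ Set.Icc xl xu, 0 ≤ au x := fun x hx =>
    le_of_lt (lt_trans (hbounds x hx).1 (hbounds x hx).2)
  -- the key sets and integrands for the change of variables
  set U : ℝ × ℝ → ℝ := fun p => f p.1 0 *
      (2 * (2 * g (H (G (2 * p.1) - p.2)) / g (2 * p.1) *
        (q (H (G (2 * p.1) - p.2)) p.2 * φ (H (G (2 * p.1) - p.2)) p.2))) with hU
  set D' : Set (ℝ × ℝ) := {p | p.1 ∈ Set.Icc xl xu ∧ 0 ≤ p.2 ∧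
      G (2 * p.1) - G xu ≤ p.2 ∧ p.2 ≤ G (2 * p.1) ∧
      p.2 ≤ auE (H (G (2 * p.1) - p.2))} with hD'
  set uV : ℝ × ℝ → ℝ := fun p => 2 * q p.1 p.2 * f (H (G p.1 + p.2) / 2) 0 * φ p.1 p.2
    with huV
  set X'' : Set (ℝ × ℝ) := {p | p.1 ∈ Set.Icc xl xu ∧ 0 ≤ p.2 ∧ p.2 ≤ auE p.1 ∧
      G (2 * xl) ≤ G p.1 + p.2 ∧ G p.1 + p.2 ≤ L} with hX''
  -- membership facts
  have hD'w : ∀ p : ℝ × ℝ, p ∈ D' → H (G (2 * p.1) - p.2) ∈ Set.Icc xl xu := by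
    rintro p ⟨hp1, hp2, hp3, hp4, hp5⟩
    constructor
    · have : G xl ≤ G (2 * p.1) - p.2 := by rw [hGxl]; linarith
      have := hHsm.monotone this; rwa [hHG] at this
    · have : G (2 * p.1) - p.2 ≤ G xu := by linarith
      have := hHsm.monotone this; rwa [hHG] at this
  have hD'2x : ∀ p : ℝ × ℝ, p ∈ D' → (2 * p.1) ∈ Set.Icc xl (2 * xu) := by
    rintro p ⟨hp1, _⟩
    exact ⟨by nlinarith [hp1.1], by linarith [hp1.2]⟩
  have hX''w : ∀ p : ℝ × ℝ, p ∈ X'' → H (G p.1 + p.2) / 2 ∈ Set.Icc xl xu := by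
    rintro p ⟨hp1, hp2, hp3, hp4, hp5⟩
    constructor
    · have := hHsm.monotone hp4; rw [hHG] at this; linarith
    · have := hHsm.monotone hp5; rw [hL, hHG] at this; linarith
  have hX''X : X'' ⊆ X := by
    rintro p ⟨hp1, hp2, hp3, _, _⟩
    exact hXmem p.1 hp1 p.2 hp2 (by rwa [hauEeq p.1 hp1] at hp3)
  -- closedness and compactness
  have hD'closed : IsClosed D' := by
    rw [hD']
    have : {p : ℝ × ℝ | p.1 ∈ Set.Icc xl xu ∧ 0 ≤ p.2 ∧
        G (2 * p.1) - G xu ≤ p.2 ∧ p.2 ≤ G (2 * p.1) ∧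
        p.2 ≤ auE (H (G (2 * p.1) - p.2))}
        = ({p : ℝ × ℝ | xl ≤ p.1} ∩ {p | p.1 ≤ xu} ∩ {p | 0 ≤ p.2}
          ∩ {p | G (2 * p.1) - G xu ≤ p.2} ∩ {p | p.2 ≤ G (2 * p.1)}
          ∩ {p | p.2 ≤ auE (H (G (2 * p.1) - p.2))}) := by
      ext p
      simp only [Set.mem_setOf_eq, Set.mem_inter_iff, Set.mem_Icc]
      tauto
    rw [this]
    have hc : Continuous fun p : ℝ × ℝ => G (2 * p.1) - p.2 := by
      apply Continuous.sub _ continuous_snd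
      exact hGcont.comp (continuous_const.mul continuous_fst)
    refine ((((( isClosed_le continuous_const continuous_fst).inter
      (isClosed_le continuous_fst continuous_const)).inter
      (isClosed_le continuous_const continuous_snd)).inter
      (isClosed_le ((hGcont.comp (continuous_const.mul continuous_fst)).sub
        continuous_const) continuous_snd)).inter
      (isClosed_le continuous_snd (hGcont.comp (continuous_const.mul continuous_fst)))).inter
      (isClosed_le continuous_snd (hauEcont.comp (hHcont.comp hc)))
  have hX''closed : IsClosed X'' := by
    rw [hX'']
    have : {p : ℝ × ℝ | p.1 ∈ Set.Icc xl xu ∧ 0 ≤ p.2 ∧ p.2 ≤ auE p.1 ∧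
        G (2 * xl) ≤ G p.1 + p.2 ∧ G p.1 + p.2 ≤ L}
        = ({p : ℝ × ℝ | xl ≤ p.1} ∩ {p | p.1 ≤ xu} ∩ {p | 0 ≤ p.2}
          ∩ {p | p.2 ≤ auE p.1} ∩ {p | G (2 * xl) ≤ G p.1 + p.2}
          ∩ {p | G p.1 + p.2 ≤ L}) := by
      ext p
      simp only [Set.mem_setOf_eq, Set.mem_inter_iff, Set.mem_Icc]
      tauto
    rw [this]
    have hc : Continuous fun p : ℝ × ℝ => G p.1 + p.2 :=
      (hGcont.comp continuous_fst).add continuous_snd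
    refine (((((isClosed_le continuous_const continuous_fst).inter
      (isClosed_le continuous_fst continuous_const)).inter
      (isClosed_le continuous_const continuous_snd)).inter
      (isClosed_le continuous_snd (hauEcont.comp continuous_fst))).inter
      (isClosed_le continuous_const hc)).inter
      (isClosed_le hc continuous_const)
  have hD'sub : D' ⊆ Set.Icc xl xu ×ˢ Set.Icc 0 L := by
    rintro p ⟨hp1, hp2, hp3, hp4, hp5⟩
    refine ⟨hp1, hp2, le_trans hp4 ?_⟩
    exact hGsm.monotone (by linarith [hp1.2])
  have hD'compact : IsCompact D' :=
    (isCompact_Icc.prod isCompact_Icc).of_isClosed_subset hD'closed hD'sub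
  have hX''sub : X'' ⊆ Set.Icc xl xu ×ˢ Set.Icc 0 Au := fun p hp => hXsub (hX''X hp)
  have hX''compact : IsCompact X'' :=
    (isCompact_Icc.prod isCompact_Icc).of_isClosed_subset hX''closed hX''sub
  -- continuity of the integrands on their supports
  have hUcont : ContinuousOn U D' := by
    have hw : Continuous fun p : ℝ × ℝ => H (G (2 * p.1) - p.2) :=
      hHcont.comp ((hGcont.comp (continuous_const.mul continuous_fst)).sub continuous_snd)
    have c1 : ContinuousOn (fun p : ℝ × ℝ => f p.1 0) D' := by
      apply hfcont.comp (by fun_prop : Continuous fun p : ℝ × ℝ => (p.1, (0:ℝ))).continuousOn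
      rintro p hp
      exact hXmem p.1 hp.1 0 (le_refl 0) (hau0 p.1 hp.1)
    have c2 : ContinuousOn (fun p : ℝ × ℝ => g (H (G (2 * p.1) - p.2))) D' :=
      hg.continuousOn.comp hw.continuousOn
        (fun p hp => ⟨(hD'w p hp).1, le_trans (hD'w p hp).2 (by linarith)⟩)
    have c3 : ContinuousOn (fun p : ℝ × ℝ => g (2 * p.1)) D' :=
      hg.continuousOn.comp (continuous_const.mul continuous_fst).continuousOn hD'2x
    have c4 : ContinuousOn (fun p : ℝ × ℝ => q (H (G (2 * p.1) - p.2)) p.2) D' := by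
      apply hqcont.comp (hw.prodMk continuous_snd).continuousOn
      exact fun p hp => ⟨hD'w p hp, Set.mem_univ _⟩
    have c5 : ContinuousOn (fun p : ℝ × ℝ => φ (H (G (2 * p.1) - p.2)) p.2) D' := by
      apply hφcont.comp (hw.prodMk continuous_snd).continuousOn
      rintro p hp
      refine hXmem _ (hD'w p hp) p.2 hp.2.1 ?_
      have h5 := hp.2.2.2.2
      rwa [hauEeq _ (hD'w p hp)] at h5
    have c3ne : ∀ p ∈ D', g (2 * p.1) ≠ 0 := fun p hp =>
      ne_of_gt (hgpos _ (hD'2x p hp))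
    exact c1.mul ((continuousOn_const.mul
      (((continuousOn_const.mul c2).div c3 c3ne).mul (c4.mul c5))))
  have huVcont : ContinuousOn uV X'' := by
    have hm : Continuous fun p : ℝ × ℝ => H (G p.1 + p.2) / 2 :=
      (hHcont.comp ((hGcont.comp continuous_fst).add continuous_snd)).div_const 2
    have c1 : ContinuousOn (fun p : ℝ × ℝ => q p.1 p.2) X'' :=
      hqcont.mono (fun p hp => ⟨(hX''X hp : p ∈ X) |> fun h => by
        rw [hX] at h; exact ⟨h.1, h.2.1⟩, Set.mem_univ _⟩)
    have c2 : ContinuousOn (fun p : ℝ × ℝ => f (H (G p.1 + p.2) / 2) 0) X'' := by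
      apply hfcont.comp (hm.prodMk continuous_const).continuousOn
      rintro p hp
      exact hXmem _ (hX''w p hp) 0 (le_refl 0) (hau0 _ (hX''w p hp))
    have c3 : ContinuousOn (fun p : ℝ × ℝ => φ p.1 p.2) X'' := hφcont.mono hX''X
    exact (continuousOn_const.mul c1).mul c2 |>.mul c3
  have hfaφcont : ContinuousOn (fun p : ℝ × ℝ => fa p.1 p.2 * φ p.1 p.2) X :=
    hfacont.mul hφcont
  -- global integrability of indicator integrands
  have hFtint : Integrable (D'.indicator U) (volume : Measure (ℝ × ℝ)) :=
    (hUcont.integrableOn_compact hD'compact).integrable_indicator hD'closed.measurableSet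
  have hVint : Integrable (X''.indicator uV) (volume : Measure (ℝ × ℝ)) :=
    (huVcont.integrableOn_compact hX''compact).integrable_indicator hX''closed.measurableSet
  have hWint : Integrable (X.indicator fun p : ℝ × ℝ => fa p.1 p.2 * φ p.1 p.2)
      (volume : Measure (ℝ × ℝ)) :=
    (hfaφcont.integrableOn_compact hXcompact).integrable_indicator hXclosed.measurableSet
  -- pointwise identification of the boundary-condition integrand
  have PCLAIM : ∀ x ∈ Set.Icc xl xu, ∀ a : ℝ, 0 < a →
      f x 0 * (2 * Set.indicator (Set.Icc xl xu)
        (fun z => 2 * g z / g (2 * x) * (q z a * φ z a)) (fl (-a) (2 * x)))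
      = D'.indicator U (x, a) := by
    intro x hx a ha
    by_cases hmem : fl (-a) (2 * x) ∈ Set.Icc xl xu
    · have hcond := (CHARmem x hx a ha.le).1 hmem
      have hval : fl (-a) (2 * x) = H (G (2 * x) - a) := CHARval x hx a ha.le hcond.2
      rw [Set.indicator_of_mem hmem]
      by_cases hD : (x, a) ∈ D'
      · rw [Set.indicator_of_mem hD]
        simp only [hU, hval]
      · rw [Set.indicator_of_notMem hD]
        have hw : H (G (2 * x) - a) ∈ Set.Icc xl xu := hval ▸ hmem
        have h5 : ¬ (a ≤ auE (H (G (2 * x) - a))) := by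
          intro h5
          exact hD ⟨hx, ha.le, hcond.1, hcond.2, h5⟩
        push_neg at h5
        rw [hauEeq _ hw] at h5
        have hq0 : q (fl (-a) (2 * x)) a = 0 := by
          rw [hval]
          exact hqzero _ hw a (fun hIoo => absurd hIoo.2 (not_lt.2 h5.le))
        rw [hq0]
        ring
    · rw [Set.indicator_of_notMem hmem]
      have hD : (x, a) ∉ D' := by
        intro hD
        apply hmem
        have := hD'w (x, a) hD
        rw [CHARval x hx a ha.le hD.2.2.2.1]
        exact this
      rw [Set.indicator_of_notMem hD]
      ring
  have hxlnull : ∀ᵐ x : ℝ ∂volume, x ∉ ({xl} : Set ℝ) := by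
    have h0 : volume ({xl} : Set ℝ) = 0 := measure_singleton xl
    exact measure_eq_zero_iff_ae_notMem.mp h0
  have hFtzero : ∀ x : ℝ, x ∉ Set.Icc xl xu → ∀ a : ℝ, D'.indicator U (x, a) = 0 :=
    fun x hx a => Set.indicator_of_notMem (fun hD => hx hD.1) _
  have step1 : (∫ x in Set.Ioc xl xu, f x 0 * φ x 0)
      = ∫ x in Set.Ioc xl xu, ∫ a in Set.Ioi (0:ℝ), D'.indicator U (x, a) := by
    have hφb' : ∀ᵐ x ∂(volume.restrict (Set.Ioc xl xu)),
        φ x 0 = ∫ a in Set.Ioi (0:ℝ),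
          2 * Set.indicator (Set.Icc xl xu)
            (fun z => 2 * g z / g (2 * x) * (q z a * φ z a)) (fl (-a) (2 * x)) :=
      ae_mono (Measure.restrict_mono Set.Ioc_subset_Icc_self le_rfl) hφbound
    have hmem' : ∀ᵐ x ∂(volume.restrict (Set.Ioc xl xu)), x ∈ Set.Ioc xl xu :=
      ae_restrict_mem measurableSet_Ioc
    apply integral_congr_ae
    filter_upwards [hφb', hmem'] with x hφx hxmem
    rw [hφx, ← integral_const_mul]
    apply setIntegral_congr_fun measurableSet_Ioi
    intro a ha
    exact PCLAIM x (Set.Ioc_subset_Icc_self hxmem) a ha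
  have step2 : (∫ x in Set.Ioc xl xu, ∫ a in Set.Ioi (0:ℝ), D'.indicator U (x, a))
      = ∫ x : ℝ, ∫ a in Set.Ioi (0:ℝ), D'.indicator U (x, a) := by
    rw [← integral_indicator measurableSet_Ioc]
    apply integral_congr_ae
    filter_upwards [hxlnull] with x hxl'
    by_cases hx : x ∈ Set.Ioc xl xu
    · rw [Set.indicator_of_mem hx]
    · rw [Set.indicator_of_notMem hx]
      have hnIcc : x ∉ Set.Icc xl xu := by
        intro hIcc
        rcases eq_or_lt_of_le hIcc.1 with heq | hlt
        · exact hxl' (by simp [← heq])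
        · exact hx ⟨hlt, hIcc.2⟩
      have : ∀ a : ℝ, D'.indicator U (x, a) = 0 := hFtzero x hnIcc
      simp [this]
  have huncurry : Function.uncurry (fun x a => D'.indicator U (x, a)) = D'.indicator U := by
    ext p
    simp [Function.uncurry]
  have hprodId : (volume : Measure ℝ).prod (volume.restrict (Set.Ioi (0:ℝ)))
      = (volume : Measure (ℝ × ℝ)).restrict (Set.univ ×ˢ Set.Ioi 0) := by
    rw [Measure.volume_eq_prod, ← Measure.prod_restrict, Measure.restrict_univ]
  have step3 : (∫ x : ℝ, ∫ a in Set.Ioi (0:ℝ), D'.indicator U (x, a))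
      = ∫ a in Set.Ioi (0:ℝ), ∫ x : ℝ, D'.indicator U (x, a) := by
    apply integral_integral_swap
    rw [huncurry, hprodId]
    exact hFtint.restrict
  -- change of variables, for each fixed a > 0
  have step4 : ∀ a : ℝ, 0 < a →
      (∫ x : ℝ, D'.indicator U (x, a)) = ∫ y : ℝ, X''.indicator uV (y, a) := by
    intro a ha
    set Ma : ℝ → ℝ := fun y => H (G y + a) / 2 with hMa
    set sa : Set ℝ := {y | (y, a) ∈ X''} with hsa
    set Dsl : Set ℝ := {x | (x, a) ∈ D'} with hDsl
    have hsameas : MeasurableSet sa :=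
      hX''closed.measurableSet.preimage (continuous_id.prodMk continuous_const).measurable
    have hDslmeas : MeasurableSet Dsl :=
      hD'closed.measurableSet.preimage (continuous_id.prodMk continuous_const).measurable
    have h2Ma : ∀ y, 2 * Ma y = H (G y + a) := by
      intro y; rw [hMa]; ring
    have hG2Ma : ∀ y, G (2 * Ma y) = G y + a := by
      intro y; rw [h2Ma, hGH]
    -- the image identity
    have himage : Dsl = Ma '' sa := by
      apply Set.Subset.antisymm
      · rintro x ⟨hx1, hx2, hx3, hx4, hx5⟩
        refine ⟨H (G (2 * x) - a), ?_, ?_⟩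
        · have hyI : H (G (2 * x) - a) ∈ Set.Icc xl xu := hD'w (x, a) ⟨hx1, hx2, hx3, hx4, hx5⟩
          simp only [hsa, hX'', Set.mem_setOf_eq]
          refine ⟨hyI, hx2, hx5, ?_, ?_⟩
          · rw [hGH]
            have : 2 * xl ≤ 2 * x := by nlinarith [hx1.1]
            have := hGsm.monotone this
            linarith
          · rw [hGH]
            have : 2 * x ≤ 2 * xu := by linarith [hx1.2]
            have := hGsm.monotone this
            linarith
        · simp only [hMa]
          rw [hGH]
          have : G (2 * x) - a + a = G (2 * x) := by ring
          rw [this, hHG]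
          ring
      · rintro x ⟨y, hy, rfl⟩
        simp only [hsa, hX'', Set.mem_setOf_eq] at hy
        obtain ⟨hy1, hy2, hy3, hy4, hy5⟩ := hy
        have hMaI : Ma y ∈ Set.Icc xl xu := hX''w (y, a) ⟨hy1, hy2, hy3, hy4, hy5⟩
        simp only [hDsl, hD', Set.mem_setOf_eq]
        refine ⟨hMaI, hy2, ?_, ?_, ?_⟩
        · rw [hG2Ma]
          have := hGsm.monotone hy1.2
          linarith
        · rw [hG2Ma]
          have := hGsm.monotone hy1.1
          rw [hGxl] at this
          linarith
        · rw [hG2Ma]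
          have : G y + a - a = G y := by ring
          rw [this, hHG]
          exact hy3
    -- injectivity and derivative of Ma
    have hMasm : StrictMono Ma := by
      intro y y' hyy
      have h1 : G y + a < G y' + a := by linarith [hGsm hyy]
      have h2 := hHsm h1
      simp only [hMa]
      linarith
    have hMader : ∀ y ∈ sa, HasDerivWithinAt Ma (gt' (H (G y + a)) * (gt' y)⁻¹ / 2) sa y := by
      intro y _
      have h1 : HasDerivAt (fun y => H (G y + a)) (gt' (H (G y + a)) * (gt' y)⁻¹) y := by
        have := (hHd (G y + a)).comp (x := y) ((hGd y).add_const a)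
        exact this
      exact (h1.div_const 2).hasDerivWithinAt
    -- slice form of the indicator functions
    have hFtslice : (fun x => D'.indicator U (x, a)) = Dsl.indicator (fun x => U (x, a)) := by
      ext x
      by_cases hxD : (x, a) ∈ D'
      · rw [Set.indicator_of_mem hxD, Set.indicator_of_mem (by exact hxD : x ∈ Dsl)]
      · rw [Set.indicator_of_notMem hxD, Set.indicator_of_notMem (by exact hxD : x ∉ Dsl)]
    have hVslice : (fun y => X''.indicator uV (y, a)) = sa.indicator (fun y => uV (y, a)) := by
      ext y
      by_cases hyX : (y, a) ∈ X''
      · rw [Set.indicator_of_mem hyX, Set.indicator_of_mem (by exact hyX : y ∈ sa)]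
      · rw [Set.indicator_of_notMem hyX, Set.indicator_of_notMem (by exact hyX : y ∉ sa)]
    rw [hFtslice, hVslice, integral_indicator hDslmeas, integral_indicator hsameas,
      himage]
    rw [integral_image_eq_integral_abs_deriv_smul hsameas hMader hMasm.injective.injOn]
    apply setIntegral_congr_fun hsameas
    intro y hy
    obtain ⟨hy1, hy2, hy3, hy4, hy5⟩ := hy
    have hwK : H (G y + a) ∈ Set.Icc xl (2 * xu) := by
      constructor
      · have := hHsm.monotone hy4
        rw [hHG] at this
        linarith
      · have := hHsm.monotone hy5
        rw [hL, hHG] at this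
        linarith
    have hgyeq : gt' y = g y := hgteq _ ⟨hy1.1, le_trans hy1.2 (by linarith)⟩
    have hgweq : gt' (H (G y + a)) = g (H (G y + a)) := hgteq _ hwK
    have hgy : 0 < g y := hgpos _ ⟨hy1.1, le_trans hy1.2 (by linarith)⟩
    have hgw : 0 < g (H (G y + a)) := hgpos _ hwK
    have hHGya : H (G (2 * Ma y) - a) = y := by
      rw [hG2Ma]
      have : G y + a - a = G y := by ring
      rw [this, hHG]
    have habs : |gt' (H (G y + a)) * (gt' y)⁻¹ / 2|
        = g (H (G y + a)) * (g y)⁻¹ / 2 := by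
      rw [hgyeq, hgweq]
      exact abs_of_pos (by positivity)
    have hUval : U (Ma y, a) = f (Ma y) 0 *
        (2 * (2 * g y / g (H (G y + a)) * (q y a * φ y a))) := by
      simp only [hU]
      rw [hHGya, h2Ma]
    have huVval : uV (y, a) = 2 * q y a * f (Ma y) 0 * φ y a := by
      simp only [huV, hMa]
    simp only []
    rw [habs, smul_eq_mul, hUval, huVval]
    field_simp
  have hVswap : Integrable (X''.indicator uV ∘ Prod.swap) (volume : Measure (ℝ × ℝ)) := by
    rw [Measure.volume_eq_prod]
    apply Integrable.swap
    rw [← Measure.volume_eq_prod]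
    exact hVint
  have step5 : (∫ a in Set.Ioi (0:ℝ), ∫ y : ℝ, X''.indicator uV (y, a))
      = ∫ y : ℝ, ∫ a in Set.Ioi (0:ℝ), X''.indicator uV (y, a) := by
    apply integral_integral_swap (f := fun a y => X''.indicator uV (y, a))
    have huc : Function.uncurry (fun a y => X''.indicator uV (y, a))
        = X''.indicator uV ∘ Prod.swap := by
      ext p
      simp [Function.uncurry, Prod.swap]
    rw [huc]
    have hprodId2 : (volume.restrict (Set.Ioi (0:ℝ))).prod (volume : Measure ℝ)
        = (volume : Measure (ℝ × ℝ)).restrict (Set.Ioi 0 ×ˢ Set.univ) := by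
      rw [Measure.volume_eq_prod, ← Measure.prod_restrict, Measure.restrict_univ]
    rw [hprodId2]
    exact hVswap.restrict
  have hVzero : ∀ y : ℝ, y ∉ Set.Icc xl xu → ∀ a : ℝ, X''.indicator uV (y, a) = 0 :=
    fun y hy a => Set.indicator_of_notMem (fun hm => hy hm.1) _
  have step6 : (∫ y : ℝ, ∫ a in Set.Ioi (0:ℝ), X''.indicator uV (y, a))
      = ∫ y in Set.Ioc xl xu, ∫ a in Set.Ioi (0:ℝ), X''.indicator uV (y, a) := by
    rw [← integral_indicator measurableSet_Ioc]
    apply integral_congr_ae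
    filter_upwards [hxlnull] with y hyl'
    by_cases hy : y ∈ Set.Ioc xl xu
    · rw [Set.indicator_of_mem hy]
    · rw [Set.indicator_of_notMem hy]
      have hnIcc : y ∉ Set.Icc xl xu := by
        intro hIcc
        rcases eq_or_lt_of_le hIcc.1 with heq | hlt
        · exact hyl' (by simp [← heq])
        · exact hy ⟨hlt, hIcc.2⟩
      have : ∀ a : ℝ, X''.indicator uV (y, a) = 0 := hVzero y hnIcc
      simp [this]
  have step7 : ∀ y ∈ Set.Icc xl xu,
      (∫ a in Set.Ioi (0:ℝ), X''.indicator uV (y, a))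
        = ∫ a in (0:ℝ)..au y, uV (y, a) := by
    intro y hy
    have hpt : ∀ a ∈ Set.Ioi (0:ℝ), X''.indicator uV (y, a)
        = (Set.Ioc 0 (au y)).indicator (fun a => uV (y, a)) a := by
      intro a ha
      by_cases hX2 : (y, a) ∈ X''
      · rw [Set.indicator_of_mem hX2]
        have haau : a ≤ au y := by
          have := hX2.2.2.1
          rwa [hauEeq _ hy] at this
        rw [Set.indicator_of_mem (show a ∈ Set.Ioc 0 (au y) from ⟨ha, haau⟩)]
      · rw [Set.indicator_of_notMem hX2]
        by_cases hIoc : a ∈ Set.Ioc 0 (au y)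
        · rw [Set.indicator_of_mem hIoc]
          have hq0 : q y a = 0 := by
            apply hqzero y hy
            intro hIoo
            apply hX2
            refine ⟨hy, le_of_lt ha, ?_, ?_, ?_⟩
            · rw [hauEeq _ hy]; exact hIoc.2
            · have := (AUB y hy).2.2
              linarith [hIoo.1]
            · have := (AUB y hy).1
              linarith [hIoo.2]
          simp only [huV, hq0]
          ring
        · rw [Set.indicator_of_notMem hIoc]
    rw [setIntegral_congr_fun measurableSet_Ioi hpt,
      integral_indicator measurableSet_Ioc,
      Measure.restrict_restrict measurableSet_Ioc,
      Set.inter_eq_self_of_subset_left Set.Ioc_subset_Ioi_self,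
      intervalIntegral.integral_of_le (hau0 y hy)]
  have CORE : (∫ x in Set.Ioc xl xu, f x 0 * φ x 0)
      = ∫ y in Set.Ioc xl xu, ∫ a in (0:ℝ)..au y, uV (y, a) := by
    rw [step1, step2, step3]
    rw [setIntegral_congr_fun measurableSet_Ioi (fun a ha => step4 a ha)]
    rw [step5, step6]
    exact setIntegral_congr_fun measurableSet_Ioc
      (fun y hy => step7 y (Set.Ioc_subset_Icc_self hy))
  -- slice continuity on fibers
  have hslice : ∀ h : ℝ → ℝ → ℝ, ContinuousOn (fun p : ℝ × ℝ => h p.1 p.2) X →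
      ∀ x ∈ Set.Icc xl xu, ContinuousOn (fun a => h x a) (Set.Icc 0 (au x)) := by
    intro h hcont x hx
    exact hcont.comp (continuous_const.prodMk continuous_id).continuousOn
      (fun a ha => hXmem x hx a ha.1 ha.2)
  -- integration by parts in the inner variable
  have P1 : ∀ x ∈ Set.Icc xl xu,
      (∫ a in (0:ℝ)..au x, f x a * φa x a)
        = -(f x 0 * φ x 0) - ∫ a in (0:ℝ)..au x, fa x a * φ x a := by
    intro x hx
    have h0au : (0:ℝ) ≤ au x := hau0 x hx
    have huIcc : Set.uIcc (0:ℝ) (au x) = Set.Icc 0 (au x) := Set.uIcc_of_le h0au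
    have hfc := hslice f hfcont x hx
    have hfac := hslice fa hfacont x hx
    have hφc := hslice φ hφcont x hx
    have hφac := hslice φa hφacont x hx
    have hIfaφ : IntervalIntegrable (fun a => fa x a * φ x a) volume 0 (au x) := by
      apply ContinuousOn.intervalIntegrable; rw [huIcc]; exact hfac.mul hφc
    have hIfφa : IntervalIntegrable (fun a => f x a * φa x a) volume 0 (au x) := by
      apply ContinuousOn.intervalIntegrable; rw [huIcc]; exact hfc.mul hφac
    have hIfa : IntervalIntegrable (fa x) volume 0 (au x) := by
      apply ContinuousOn.intervalIntegrable; rw [huIcc]; exact hfac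
    have hIφa : IntervalIntegrable (φa x) volume 0 (au x) := by
      apply ContinuousOn.intervalIntegrable; rw [huIcc]; exact hφac
    have hIBP := intervalIntegral.integral_deriv_mul_eq_sub
      (u := f x) (v := φ x) (u' := fa x) (v' := φa x)
      (fun a ha => hfderiv x hx a (huIcc ▸ ha))
      (fun a ha => hφderiv x hx a (huIcc ▸ ha)) hIfa hIφa
    rw [hfbound x hx] at hIBP
    have hsplit : (∫ a in (0:ℝ)..au x, (fa x a * φ x a + f x a * φa x a))
        = (∫ a in (0:ℝ)..au x, fa x a * φ x a) + ∫ a in (0:ℝ)..au x, f x a * φa x a :=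
      intervalIntegral.integral_add hIfaφ hIfφa
    rw [hsplit] at hIBP
    linarith [hIBP]
  -- identification of the nonlinear term
  have huVcx : ∀ x ∈ Set.Icc xl xu,
      ContinuousOn (fun a => uV (x, a)) (Set.Icc (al x) (au x)) := by
    intro x hx
    have hs1 : ContinuousOn (fun a : ℝ => q x a) (Set.Icc (al x) (au x)) := by
      apply hqcont.comp (continuous_const.prodMk continuous_id).continuousOn
      exact fun a _ => ⟨hx, Set.mem_univ _⟩
    have hs2 : ContinuousOn (fun a : ℝ => f (H (G x + a) / 2) 0) (Set.Icc (al x) (au x)) := by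
      apply hfcont.comp
        (((hHcont.comp (continuous_const.add continuous_id)).div_const 2).prodMk
          continuous_const).continuousOn
      intro a ha
      have hl : G (2 * xl) ≤ G x + a := by
        have := (AUB x hx).2.2
        linarith [ha.1]
      have hu : G x + a ≤ L := by
        have := (AUB x hx).1
        linarith [ha.2]
      have hlo := hHsm.monotone hl
      rw [hHG] at hlo
      have hhi := hHsm.monotone hu
      rw [hL, hHG] at hhi
      refine hXmem (H (G x + a) / 2) ⟨?_, ?_⟩ 0 le_rfl (hau0 _ ⟨?_, ?_⟩) <;> linarith
    have hs3 : ContinuousOn (fun a : ℝ => φ x a) (Set.Icc (al x) (au x)) :=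
      (hslice φ hφcont x hx).mono
        (Set.Icc_subset_Icc (hbounds x hx).1.le (le_refl _))
    simp only [huV]
    exact ((continuousOn_const.mul hs1).mul hs2).mul hs3
  have huVind : ∀ x ∈ Set.Icc xl xu, (fun a => uV (x, a))
      = (Set.Icc (al x) (au x)).indicator (fun a => uV (x, a)) := by
    intro x hx
    funext a
    by_cases hmem : a ∈ Set.Icc (al x) (au x)
    · rw [Set.indicator_of_mem hmem]
    · rw [Set.indicator_of_notMem hmem]
      have hq0 : q x a = 0 :=
        hqzero x hx a (fun hIoo => hmem ⟨hIoo.1.le, hIoo.2.le⟩)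
      simp only [huV, hq0]
      ring
  have hII_uV : ∀ x ∈ Set.Icc xl xu,
      IntervalIntegrable (fun a => uV (x, a)) volume 0 (au x) := by
    intro x hx
    rw [intervalIntegrable_iff_integrableOn_Ioc_of_le (hau0 x hx), huVind x hx]
    exact (((huVcx x hx).integrableOn_compact
      isCompact_Icc).integrable_indicator measurableSet_Icc).integrableOn
  have P2 : ∀ x ∈ Set.Icc xl xu,
      (∫ a in (0:ℝ)..au x, (fa x a + 2 * q x a * f (fl a x / 2) 0) * φ x a)
        = (∫ a in (0:ℝ)..au x, fa x a * φ x a) + ∫ a in (0:ℝ)..au x, uV (x, a) := by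
    intro x hx
    have h0au : (0:ℝ) ≤ au x := hau0 x hx
    have huIcc : Set.uIcc (0:ℝ) (au x) = Set.Icc 0 (au x) := Set.uIcc_of_le h0au
    have hcongr : Set.EqOn (fun a => (fa x a + 2 * q x a * f (fl a x / 2) 0) * φ x a)
        (fun a => fa x a * φ x a + uV (x, a)) (Set.uIcc 0 (au x)) := by
      intro a ha
      rw [huIcc] at ha
      by_cases hq : q x a = 0
      · simp only [huV, hq]
        ring
      · have hIoo : a ∈ Set.Ioo (al x) (au x) := by
          by_contra hno
          exact hq (hqzero x hx a hno)
        have hfla : fl a x = H (G x + a) :=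
          (AUB x hx).2.1 a ⟨ha.1, ha.2⟩
        simp only [huV, hfla]
        ring
    rw [intervalIntegral.integral_congr hcongr]
    exact intervalIntegral.integral_add
      (by apply ContinuousOn.intervalIntegrable
          rw [huIcc]
          exact (hslice fa hfacont x hx).mul (hslice φ hφcont x hx))
      (hII_uV x hx)
  -- integrability of the outer integrands
  have hprodId3 : (volume.restrict (Set.Ioc xl xu)).prod (volume.restrict (Set.Ioi (0:ℝ)))
      = (volume : Measure (ℝ × ℝ)).restrict (Set.Ioc xl xu ×ˢ Set.Ioi 0) := by
    rw [Measure.volume_eq_prod, ← Measure.prod_restrict]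
  have hIbf : IntervalIntegrable (fun x => f x 0 * φ x 0) volume xl xu := by
    apply ContinuousOn.intervalIntegrable
    rw [Set.uIcc_of_le hxu.le]
    have c1 : ContinuousOn (fun x => f x 0) (Set.Icc xl xu) := by
      apply hfcont.comp (continuous_id.prodMk continuous_const).continuousOn
      exact fun x hx => hXmem x hx 0 le_rfl (hau0 x hx)
    have c2 : ContinuousOn (fun x => φ x 0) (Set.Icc xl xu) := by
      apply hφcont.comp (continuous_id.prodMk continuous_const).continuousOn
      exact fun x hx => hXmem x hx 0 le_rfl (hau0 x hx)
    exact c1.mul c2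
  have hI2int : IntegrableOn (fun x => ∫ a in (0:ℝ)..au x, fa x a * φ x a)
      (Set.Ioc xl xu) volume := by
    have hWres : Integrable (X.indicator fun p : ℝ × ℝ => fa p.1 p.2 * φ p.1 p.2)
        ((volume.restrict (Set.Ioc xl xu)).prod (volume.restrict (Set.Ioi (0:ℝ)))) := by
      rw [hprodId3]
      exact hWint.restrict
    have hint := hWres.integral_prod_left
    apply hint.congr
    filter_upwards [ae_restrict_mem measurableSet_Ioc] with x hx
    have hxI : x ∈ Set.Icc xl xu := Set.Ioc_subset_Icc_self hx
    have hpt : ∀ a ∈ Set.Ioi (0:ℝ),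
        X.indicator (fun p : ℝ × ℝ => fa p.1 p.2 * φ p.1 p.2) (x, a)
          = (Set.Ioc 0 (au x)).indicator (fun a => fa x a * φ x a) a := by
      intro a ha
      by_cases hmem : (x, a) ∈ X
      · rw [Set.indicator_of_mem hmem]
        have hX' : xl ≤ x ∧ x ≤ xu ∧ 0 ≤ a ∧ a ≤ au x := by rwa [hX] at hmem
        rw [Set.indicator_of_mem (show a ∈ Set.Ioc 0 (au x) from ⟨ha, hX'.2.2.2⟩)]
      · rw [Set.indicator_of_notMem hmem]
        have : a ∉ Set.Ioc 0 (au x) := by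
          intro hIoc
          exact hmem (hXmem x hxI a hIoc.1.le hIoc.2)
        rw [Set.indicator_of_notMem this]
    rw [setIntegral_congr_fun measurableSet_Ioi hpt,
      integral_indicator measurableSet_Ioc,
      Measure.restrict_restrict measurableSet_Ioc,
      Set.inter_eq_self_of_subset_left Set.Ioc_subset_Ioi_self,
      intervalIntegral.integral_of_le (hau0 x hxI)]
  have hJ2int : IntegrableOn (fun y => ∫ a in (0:ℝ)..au y, uV (y, a))
      (Set.Ioc xl xu) volume := by
    have hVres : Integrable (X''.indicator uV)
        ((volume.restrict (Set.Ioc xl xu)).prod (volume.restrict (Set.Ioi (0:ℝ)))) := by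
      rw [hprodId3]
      exact hVint.restrict
    have hint := hVres.integral_prod_left
    apply hint.congr
    filter_upwards [ae_restrict_mem measurableSet_Ioc] with y hy
    exact step7 y (Set.Ioc_subset_Icc_self hy)
  have hI2II : IntervalIntegrable (fun x => ∫ a in (0:ℝ)..au x, fa x a * φ x a)
      volume xl xu := by
    rw [intervalIntegrable_iff_integrableOn_Ioc_of_le hxu.le]
    exact hI2int
  have hJ2II : IntervalIntegrable (fun y => ∫ a in (0:ℝ)..au y, uV (y, a))
      volume xl xu := by
    rw [intervalIntegrable_iff_integrableOn_Ioc_of_le hxu.le]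
    exact hJ2int
  -- final assembly
  have hCORE' : (∫ x in xl..xu, f x 0 * φ x 0)
      = ∫ y in xl..xu, ∫ a in (0:ℝ)..au y, uV (y, a) := by
    rw [intervalIntegral.integral_of_le hxu.le, intervalIntegral.integral_of_le hxu.le]
    exact CORE
  have e1 : (∫ x in xl..xu, ∫ a in (0:ℝ)..au x, f x a * φa x a)
      = ∫ x in xl..xu,
          (-(f x 0 * φ x 0) - ∫ a in (0:ℝ)..au x, fa x a * φ x a) := by
    apply intervalIntegral.integral_congr
    intro x hx
    rw [Set.uIcc_of_le hxu.le] at hx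
    exact P1 x hx
  have e2 : (∫ x in xl..xu,
        (-(f x 0 * φ x 0) - ∫ a in (0:ℝ)..au x, fa x a * φ x a))
      = -(∫ x in xl..xu, f x 0 * φ x 0)
        - ∫ x in xl..xu, ∫ a in (0:ℝ)..au x, fa x a * φ x a := by
    have h := intervalIntegral.integral_sub (a := xl) (b := xu) (μ := volume)
      (f := fun x => -(f x 0 * φ x 0))
      (g := fun x => ∫ a in (0:ℝ)..au x, fa x a * φ x a)
      (by exact hIbf.neg) hI2II
    rw [h, intervalIntegral.integral_neg]
  have e3 : (∫ x in xl..xu, ∫ a in (0:ℝ)..au x,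
        (fa x a + 2 * q x a * f (fl a x / 2) 0) * φ x a)
      = (∫ x in xl..xu, ∫ a in (0:ℝ)..au x, fa x a * φ x a)
        + ∫ x in xl..xu, ∫ a in (0:ℝ)..au x, uV (x, a) := by
    have := intervalIntegral.integral_congr (a := xl) (b := xu) (μ := volume)
      (f := fun x => ∫ a in (0:ℝ)..au x, (fa x a + 2 * q x a * f (fl a x / 2) 0) * φ x a)
      (g := fun x => (∫ a in (0:ℝ)..au x, fa x a * φ x a) + ∫ a in (0:ℝ)..au x, uV (x, a))
      (by intro x hx
          rw [Set.uIcc_of_le hxu.le] at hx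
          exact P2 x hx)
    rw [this, intervalIntegral.integral_add hI2II hJ2II]
  rw [e1, e2, e3, hCORE']
  ring
end

section
/- Let λ > 0 and let ṽ ∈ C([x̲, x̄]) satisfy K_λ ṽ = ṽ. Define v(x_b, a) := ∫_a^∞ 2 q(x_b, s) ṽ(S_s(x_b)) e^{−λ(s − a)} ds for (x_b, a) with x̲ ≤ x_b ≤ x̄ and 0 ≤ a ≤ ā(x_b). Then v is continuous, v(x_b, 0) = ṽ(x_b), v(x_b, ā(x_b)) = 0, the partial derivative ∂v/∂a exists and is continuous, and v satisfies λ v(x_b, a) − (∂v/∂a)(x_b, a) = 2 q(x_b, a) ṽ(S_a(x_b)) for all such (x_b, a). -/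
open MeasureTheory

/-- Barrier lemma: if `u' = d`, `d > 0` whenever `u = c` on `[a,b]`, and `u b ≤ c`,
then `u ≤ c` on `[a,b]`. -/
lemma aux_barrier_le {u d : ℝ → ℝ} {a b c : ℝ}
    (hu : ∀ t, HasDerivAt u (d t) t)
    (hc : ∀ t ∈ Set.Icc a b, u t = c → 0 < d t)
    (hb : u b ≤ c) : ∀ t ∈ Set.Icc a b, u t ≤ c := by
  intro t ht
  by_contra hlt
  push_neg at hlt
  have hcont : Continuous u := continuous_iff_continuousAt.2 fun s => (hu s).continuousAt
  have htb : t ≤ b := ht.2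
  set S : Set ℝ := Set.Icc t b ∩ u ⁻¹' Set.Iic c with hS
  have hbS : b ∈ S := ⟨⟨htb, le_rfl⟩, hb⟩
  have hSne : S.Nonempty := ⟨b, hbS⟩
  have hSbdd : BddBelow S := ⟨t, fun s hs => hs.1.1⟩
  have hScl : IsClosed S := isClosed_Icc.inter (isClosed_Iic.preimage hcont)
  have hrS : sInf S ∈ S := hScl.csInf_mem hSne hSbdd
  set r := sInf S with hr
  have hur : u r ≤ c := hrS.2
  have htr : t < r := lt_of_le_of_ne hrS.1.1 (fun h => absurd hur (by rw [← h]; exact not_le.2 hlt))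
  have hfor : ∀ s ∈ Set.Ico t r, c < u s := by
    intro s hs
    by_contra h
    push_neg at h
    exact absurd (csInf_le hSbdd ⟨⟨hs.1, le_trans hs.2.le hrS.1.2⟩, h⟩) (not_le.2 hs.2)
  have hurge : c ≤ u r := by
    have hev : ∀ᶠ s in nhdsWithin r (Set.Iio r), c ≤ u s := by
      filter_upwards [Ioo_mem_nhdsLT_of_mem (⟨htr, le_rfl⟩ : r ∈ Set.Ioc t r)] with s hs
      exact (hfor s ⟨hs.1.le, hs.2⟩).le
    exact ge_of_tendsto ((hcont.continuousAt (x := r)).continuousWithinAt) hev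
  have huc : u r = c := le_antisymm hur hurge
  have hdr : 0 < d r := hc r ⟨le_trans ht.1 hrS.1.1, hrS.1.2⟩ huc
  have hslope : Filter.Tendsto (slope u r) (nhdsWithin r {r}ᶜ) (nhds (d r)) :=
    hasDerivAt_iff_tendsto_slope.mp (hu r)
  have hev2 : ∀ᶠ s in nhdsWithin r {r}ᶜ, 0 < slope u r s :=
    hslope.eventually (eventually_gt_nhds hdr)
  have hle : nhdsWithin r (Set.Iio r) ≤ nhdsWithin r {r}ᶜ :=
    nhdsWithin_mono r (fun s hs => ne_of_lt hs)
  have hev3 : ∀ᶠ s in nhdsWithin r (Set.Iio r), 0 < slope u r s ∧ s ∈ Set.Ioo t r :=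
    (hev2.filter_mono hle).and (Ioo_mem_nhdsLT_of_mem ⟨htr, le_rfl⟩)
  obtain ⟨s, hs1, hs2⟩ := hev3.exists
  have hsr : s - r < 0 := sub_neg.2 hs2.2
  rw [slope_def_field, div_pos_iff] at hs1
  rcases hs1 with ⟨h1, h2⟩ | ⟨h1, h2⟩
  · linarith
  · have : u s < c := by rw [← huc]; linarith
    exact absurd (hfor s ⟨hs2.1.le, hs2.2⟩) (not_lt.2 this.le)

/-- (from a fixed point `ṽ` of `K_λ` one builds an eigenfunction `v` of the
adjoint generator: `v(x_b,a) = ∫_a^∞ 2 q(x_b,s) ṽ(S_s(x_b)) e^{-λ(s-a)} ds` satisfies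
`λ v − ∂v/∂a = 2 q(x_b,a) ṽ(S_a(x_b))`, with `v(·,0) = ṽ` and `v(x_b, ā(x_b)) = 0`).
`fl r x` is the flow `π_r x` of `x' = g(x)`, `S_a(x) = fl a x / 2`. -/
theorem eigenfunction_of_adjoint_from_K_fixed_point
    (xl xu : ℝ) (hxl : 0 < xl) (hxu : xl < xu)
    (g : ℝ → ℝ) (hg : ContDiffOn ℝ 1 g (Set.Icc xl (2 * xu)))
    (hgpos : ∀ x ∈ Set.Icc xl (2 * xu), 0 < g x)
    (fl : ℝ → ℝ → ℝ)
    (hfl0 : ∀ x, fl 0 x = x)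
    (hflderiv : ∀ a x, HasDerivAt (fun s => fl s x) (g (fl a x)) a)
    (q : ℝ → ℝ → ℝ)
    (hqcont : ContinuousOn (fun p : ℝ × ℝ => q p.1 p.2) (Set.Icc xl xu ×ˢ Set.univ))
    (hqnn : ∀ x a, 0 ≤ q x a)
    (al au : ℝ → ℝ)
    (halcont : ContinuousOn al (Set.Icc xl xu)) (haucont : ContinuousOn au (Set.Icc xl xu))
    (hbounds : ∀ x ∈ Set.Icc xl xu, 0 < al x ∧ al x < au x)
    (hqdens : ∀ x ∈ Set.Icc xl xu, ∫ a, q x a = 1)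
    (hqpos : ∀ x ∈ Set.Icc xl xu, ∀ a ∈ Set.Ioo (al x) (au x), 0 < q x a)
    (hqzero : ∀ x ∈ Set.Icc xl xu, ∀ a, a ∉ Set.Ioo (al x) (au x) → q x a = 0)
    (hA5 : ∀ x ∈ Set.Icc xl xu, xl ≤ fl (al x) x / 2 ∧ fl (au x) x / 2 ≤ xu)
    (X : Set (ℝ × ℝ))
    (hX : X = {p : ℝ × ℝ | xl ≤ p.1 ∧ p.1 ≤ xu ∧ 0 ≤ p.2 ∧ p.2 ≤ au p.1})
    -- `λ > 0` and a fixed point `ṽ` of `K_λ`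
    (lam : ℝ) (hlam : 0 < lam)
    (vt : ℝ → ℝ) (hvtcont : ContinuousOn vt (Set.Icc xl xu))
    (hvtfix : ∀ x ∈ Set.Icc xl xu,
      (∫ a in al x..au x, 2 * Real.exp (-(lam * a)) * q x a * vt (fl a x / 2)) = vt x)
    -- the function `v`
    (v : ℝ → ℝ → ℝ)
    (hv : ∀ x a, v x a
      = ∫ s in Set.Ioi a, 2 * q x s * vt (fl s x / 2) * Real.exp (-(lam * (s - a)))) :
    ContinuousOn (fun p : ℝ × ℝ => v p.1 p.2) X
    ∧ (∀ x ∈ Set.Icc xl xu, v x 0 = vt x)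
    ∧ (∀ x ∈ Set.Icc xl xu, v x (au x) = 0)
    ∧ (∀ x ∈ Set.Icc xl xu, ∀ a ∈ Set.Icc (0:ℝ) (au x),
        HasDerivAt (v x) (lam * v x a - 2 * q x a * vt (fl a x / 2)) a)
    ∧ ContinuousOn
        (fun p : ℝ × ℝ => lam * v p.1 p.2 - 2 * q p.1 p.2 * vt (fl p.2 p.1 / 2)) X := by
  have hxl2xu : xl ≤ 2 * xu := by nlinarith
  have hxlt2xu : xl < 2 * xu := by nlinarith
  have hxlxu : xl ≤ xu := hxu.le
  -- derivative of reflected flow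
  have hwderiv : ∀ (T x : ℝ), ∀ s, HasDerivAt (fun s => - fl (T - s) x) (g (fl (T - s) x)) s := by
    intro T x s
    have h1 : HasDerivAt (fun s : ℝ => T - s) (-1) s := by
      simpa using (hasDerivAt_id s).const_sub T
    have h2 := ((hflderiv (T - s) x).comp s h1).neg
    refine h2.congr_deriv (Eq.symm ?_)
    ring
  -- barrier from below
  have hbarrier_ge : ∀ (x T0 T1 cl : ℝ), cl ∈ Set.Icc xl (2 * xu) → T0 ≤ T1 →
      cl ≤ fl T0 x → ∀ t ∈ Set.Icc T0 T1, cl ≤ fl t x := by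
    intro x T0 T1 cl hcl hT hstart t ht
    have key := aux_barrier_le (u := fun s => - fl (T0 + T1 - s) x)
      (d := fun s => g (fl (T0 + T1 - s) x)) (a := T0) (b := T1) (c := -cl)
      (hwderiv (T0 + T1) x)
      (fun s _ hs => by
        have h' : fl (T0 + T1 - s) x = cl := by
          have := hs
          simp only [neg_inj] at this
          exact this
        show 0 < g (fl (T0 + T1 - s) x)
        rw [h']; exact hgpos cl hcl)
      (by simpa using hstart)
    have := key (T0 + T1 - t) ⟨by linarith [ht.2], by linarith [ht.1]⟩
    simp only [show T0 + T1 - (T0 + T1 - t) = t by ring] at this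
    linarith
  -- the flow stays above xl
  have hlow : ∀ x, xl ≤ x → ∀ t, 0 ≤ t → xl ≤ fl t x := by
    intro x hx t ht
    exact hbarrier_ge x 0 t xl ⟨le_rfl, hxl2xu⟩ ht (by rw [hfl0]; exact hx) t ⟨ht, le_rfl⟩
  -- the flow stays below 2*xu up to time au x
  have hupp : ∀ x ∈ Set.Icc xl xu, ∀ t ∈ Set.Icc 0 (au x), fl t x ≤ 2 * xu := by
    intro x hx
    exact aux_barrier_le (u := fun s => fl s x) (d := fun s => g (fl s x))
      (fun s => hflderiv s x)
      (fun s _ hs => by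
        show 0 < g (fl s x)
        rw [show fl s x = 2 * xu from hs]; exact hgpos _ ⟨hxl2xu, le_rfl⟩)
      (by linarith [(hA5 x hx).2])
  have htraj : ∀ x ∈ Set.Icc xl xu, ∀ t ∈ Set.Icc 0 (au x), fl t x ∈ Set.Icc xl (2 * xu) :=
    fun x hx t ht => ⟨hlow x hx.1 t ht.1, hupp x hx t ht⟩
  -- S_s x ∈ [xl, xu] for s ∈ [al x, au x]
  have hau0 : ∀ x ∈ Set.Icc xl xu, 0 ≤ au x := fun x hx =>
    le_trans (hbounds x hx).1.le (hbounds x hx).2.le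
  have hS_mem : ∀ x ∈ Set.Icc xl xu, ∀ s ∈ Set.Icc (al x) (au x),
      fl s x / 2 ∈ Set.Icc xl xu := by
    intro x hx s hs
    have h1 : 2 * xl ≤ fl s x := by
      refine hbarrier_ge x (al x) (au x) (2 * xl) ⟨by linarith, by linarith⟩
        (hbounds x hx).2.le (by linarith [(hA5 x hx).1]) s hs
    have h2 : fl s x ≤ 2 * xu := hupp x hx s ⟨le_trans (hbounds x hx).1.le hs.1, hs.2⟩
    constructor <;> linarith
  -- global bound on au
  obtain ⟨C, hC⟩ := IsCompact.exists_bound_of_continuousOn isCompact_Icc haucont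
  set B := C + 1 with hBdef
  have hB : ∀ x ∈ Set.Icc xl xu, au x < B := fun x hx =>
    lt_of_le_of_lt (le_trans (le_abs_self _) (hC x hx)) (lt_add_one C)
  have hB0 : 0 < B := lt_of_le_of_lt (hau0 xl ⟨le_rfl, hxlxu⟩) (hB xl ⟨le_rfl, hxlxu⟩)
  -- bound on g
  obtain ⟨M, hM⟩ := IsCompact.exists_bound_of_continuousOn isCompact_Icc hg.continuousOn
  have hM0 : 0 ≤ M := le_trans (norm_nonneg (g xl)) (hM xl ⟨le_rfl, hxl2xu⟩)
  -- speed bound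
  have hspeed : ∀ x ∈ Set.Icc xl xu, ∀ t1 ∈ Set.Icc (0:ℝ) (au x), ∀ t2 ∈ Set.Icc (0:ℝ) (au x),
      |fl t1 x - fl t2 x| ≤ M * |t1 - t2| := by
    intro x hx t1 ht1 t2 ht2
    have := Convex.norm_image_sub_le_of_norm_hasDerivWithin_le
      (f := fun s => fl s x) (f' := fun s => g (fl s x)) (C := M)
      (s := Set.Icc (0:ℝ) (au x))
      (fun t ht => (hflderiv t x).hasDerivWithinAt)
      (fun t ht => hM _ (htraj x hx t ht))
      (convex_Icc _ _) ht2 ht1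
    simpa [Real.norm_eq_abs] using this
  -- Lipschitz constant for g
  obtain ⟨K0, hK0⟩ := IsCompact.exists_bound_of_continuousOn isCompact_Icc
    (hg.continuousOn_derivWithin (uniqueDiffOn_Icc hxlt2xu) le_rfl)
  have hK00 : 0 ≤ K0 := le_trans (norm_nonneg _) (hK0 xl ⟨le_rfl, hxl2xu⟩)
  set K : NNReal := Real.toNNReal K0 with hKdef
  have hKlip : LipschitzOnWith K g (Set.Icc xl (2 * xu)) := by
    refine Convex.lipschitzOnWith_of_nnnorm_derivWithin_le (convex_Icc _ _)
      (hg.differentiableOn one_ne_zero) (fun y hy => ?_)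
    rw [← NNReal.coe_le_coe, coe_nnnorm, Real.coe_toNNReal _ hK00]
    exact hK0 y hy
  -- Gronwall for flow in initial condition
  have hgron : ∀ x ∈ Set.Icc xl xu, ∀ y ∈ Set.Icc xl xu,
      ∀ τ ∈ Set.Icc 0 (min (au x) (au y)),
      dist (fl τ x) (fl τ y) ≤ dist x y * Real.exp (K * τ) := by
    intro x hx y hy τ hτ
    have hτx : Set.Icc (0:ℝ) τ ⊆ Set.Icc 0 (au x) :=
      Set.Icc_subset_Icc le_rfl (le_trans hτ.2 (min_le_left _ _))
    have hτy : Set.Icc (0:ℝ) τ ⊆ Set.Icc 0 (au y) :=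
      Set.Icc_subset_Icc le_rfl (le_trans hτ.2 (min_le_right _ _))
    have key := dist_le_of_trajectories_ODE_of_mem
      (v := fun _ => g) (s := fun _ => Set.Icc xl (2 * xu)) (K := K)
      (f := fun s => fl s x) (g := fun s => fl s y) (a := 0) (b := τ) (δ := dist x y)
      (fun _ _ => hKlip)
      (Continuous.continuousOn (continuous_iff_continuousAt.2
        fun s => (hflderiv s x).continuousAt))
      (fun t ht => (hflderiv t x).hasDerivWithinAt)
      (fun t ht => htraj x hx t (hτx (Set.Ico_subset_Icc_self ht)))
      (Continuous.continuousOn (continuous_iff_continuousAt.2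
        fun s => (hflderiv s y).continuousAt))
      (fun t ht => (hflderiv t y).hasDerivWithinAt)
      (fun t ht => htraj y hy t (hτy (Set.Ico_subset_Icc_self ht)))
      (by show dist (fl 0 x) (fl 0 y) ≤ dist x y
          rw [hfl0, hfl0])
      τ ⟨hτ.1, le_rfl⟩
    simpa using key
  -- joint continuity of the flow on D
  set D : Set (ℝ × ℝ) := {p | p.1 ∈ Set.Icc xl xu ∧ p.2 ∈ Set.Icc 0 (au p.1)} with hDdef
  have hflD : ContinuousOn (fun p : ℝ × ℝ => fl p.2 p.1) D := by
    set L : ℝ := Real.exp (K * B) + 2 * M with hLdef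
    have hL0 : 0 ≤ L := by positivity
    have key : ∀ p ∈ D, ∀ p' ∈ D,
        dist (fl p.2 p.1) (fl p'.2 p'.1) ≤ L * dist p p' := by
      intro p hp p' hp'
      obtain ⟨x, t⟩ := p
      obtain ⟨y, s⟩ := p'
      rw [hDdef, Set.mem_setOf_eq] at hp hp'
      obtain ⟨hx, ht⟩ := hp
      obtain ⟨hy, hs⟩ := hp'
      simp only at hx ht hy hs ⊢
      set τ := min t (au y) with hτdef
      have hτ0 : 0 ≤ τ := le_min ht.1 (hau0 y hy)
      have hτt : τ ≤ t := min_le_left _ _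
      have hτay : τ ≤ au y := min_le_right _ _
      have h1 : dist (fl t x) (fl τ x) ≤ M * |t - s| := by
        have hb := hspeed x hx t ht τ ⟨hτ0, le_trans hτt ht.2⟩
        have htτ : |t - τ| ≤ |t - s| := by
          rcases le_total t (au y) with h | h
          · rw [hτdef, min_eq_left h]
            simp
          · rw [hτdef, min_eq_right h,
              abs_of_nonneg (by linarith : (0:ℝ) ≤ t - au y)]
            calc t - au y ≤ t - s := by linarith [hs.2]
              _ ≤ |t - s| := le_abs_self _
        rw [Real.dist_eq]
        exact le_trans hb (mul_le_mul_of_nonneg_left htτ hM0)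
      have h2 : dist (fl τ x) (fl τ y) ≤ dist x y * Real.exp (K * B) := by
        have := hgron x hx y hy τ ⟨hτ0, le_min (le_trans hτt ht.2) hτay⟩
        refine le_trans this (mul_le_mul_of_nonneg_left ?_ dist_nonneg)
        apply Real.exp_le_exp.2
        exact mul_le_mul_of_nonneg_left (le_trans hτay (hB y hy).le) K.2
      have h3 : dist (fl τ y) (fl s y) ≤ M * |t - s| := by
        have hb := hspeed y hy τ ⟨hτ0, hτay⟩ s hs
        have hτs : |τ - s| ≤ |t - s| := by
          rcases le_total t (au y) with h | h
          · rw [hτdef, min_eq_left h]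
          · rw [hτdef, min_eq_right h,
              abs_of_nonneg (by linarith [hs.2] : (0:ℝ) ≤ au y - s)]
            calc au y - s ≤ t - s := by linarith
              _ ≤ |t - s| := le_abs_self _
        rw [Real.dist_eq]
        exact le_trans hb (mul_le_mul_of_nonneg_left hτs hM0)
      calc dist (fl t x) (fl s y)
          ≤ dist (fl t x) (fl τ x) + dist (fl τ x) (fl τ y) + dist (fl τ y) (fl s y) :=
            dist_triangle4 _ _ _ _
        _ ≤ M * |t - s| + dist x y * Real.exp (K * B) + M * |t - s| := by
            gcongr
        _ ≤ L * dist (⟨x, t⟩ : ℝ × ℝ) (y, s) := by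
            have hd1 : dist x y ≤ dist (⟨x, t⟩ : ℝ × ℝ) (y, s) := le_max_left _ _
            have hd2 : |t - s| ≤ dist (⟨x, t⟩ : ℝ × ℝ) (y, s) := by
              rw [← Real.dist_eq]; exact le_max_right _ _
            have hdnn : (0:ℝ) ≤ dist (⟨x, t⟩ : ℝ × ℝ) (y, s) := dist_nonneg
            rw [hLdef]
            nlinarith [Real.exp_pos (K * B)]
    have : LipschitzOnWith (Real.toNNReal L) (fun p : ℝ × ℝ => fl p.2 p.1) D := by
      rw [lipschitzOnWith_iff_dist_le_mul]
      intro p hp p' hp'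
      rw [Real.coe_toNNReal _ hL0]
      exact key p hp p' hp'
    exact this.continuousOn
  -- clamping to [xl, xu]
  set cc : ℝ → ℝ := fun x => max xl (min x xu) with hccdef
  have hccmem : ∀ x, cc x ∈ Set.Icc xl xu := fun x =>
    ⟨le_max_left _ _, max_le hxlxu (min_le_right _ _)⟩
  have hccid : ∀ x ∈ Set.Icc xl xu, cc x = x := fun x hx => by
    rw [hccdef]; simp only [min_eq_left hx.2, max_eq_right hx.1]
  have hcccont : Continuous cc := continuous_const.max (continuous_id.min continuous_const)
  set vtc : ℝ → ℝ := fun y => vt (cc y) with hvtcdef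
  have hvtccont : Continuous vtc := hvtcont.comp_continuous hcccont hccmem
  have hvtceq : ∀ y ∈ Set.Icc xl xu, vtc y = vt y := fun y hy => by
    rw [hvtcdef]; simp only [hccid y hy]
  set σf : ℝ × ℝ → ℝ := fun p => max 0 (min p.2 (au (cc p.1))) with hσdef
  have hσcont : Continuous σf := by
    apply continuous_const.max
    exact continuous_snd.min ((haucont.comp_continuous (hcccont.comp continuous_fst)
      (fun p => hccmem p.1)))
  have hσmem : ∀ p : ℝ × ℝ, σf p ∈ Set.Icc 0 (au (cc p.1)) := fun p =>
    ⟨le_max_left _ _, max_le (hau0 _ (hccmem p.1)) (min_le_right _ _)⟩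
  set Fc : ℝ × ℝ → ℝ := fun p => 2 * q (cc p.1) p.2 * vtc (fl (σf p) (cc p.1) / 2)
    with hFcdef
  have hFccont : Continuous Fc := by
    apply Continuous.mul
    · apply continuous_const.mul
      exact hqcont.comp_continuous (((hcccont.comp continuous_fst)).prodMk continuous_snd)
        (fun p => ⟨hccmem p.1, Set.mem_univ _⟩)
    · apply hvtccont.comp
      apply Continuous.div_const
      exact hflD.comp_continuous
        (((hcccont.comp continuous_fst)).prodMk hσcont)
        (fun p => by
          rw [hDdef, Set.mem_setOf_eq]
          exact ⟨hccmem p.1, hσmem p⟩)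
  set Gc : ℝ × ℝ → ℝ := fun p => Fc p * Real.exp (-(lam * p.2)) with hGcdef
  have hGccont : Continuous Gc := hFccont.mul (Real.continuous_exp.comp (by fun_prop))
  set G : ℝ → ℝ → ℝ := fun x s => Gc (x, s) with hGdef
  have hGcont : ∀ x, Continuous (G x) := fun x =>
    hGccont.comp (Continuous.prodMk_right x)
  -- Fc agrees with the true integrand on Icc xl xu
  have hFc_eq : ∀ x ∈ Set.Icc xl xu, ∀ s : ℝ,
      Fc (x, s) = 2 * q x s * vt (fl s x / 2) := by
    intro x hx s
    rw [hFcdef]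
    simp only [hccid x hx]
    by_cases hsIoo : s ∈ Set.Ioo (al x) (au x)
    · have hσs : σf (x, s) = s := by
        rw [hσdef]
        simp only [hccid x hx]
        rw [min_eq_left hsIoo.2.le, max_eq_right (le_trans (hbounds x hx).1.le hsIoo.1.le)]
      rw [hσs, hvtceq _ (hS_mem x hx s ⟨hsIoo.1.le, hsIoo.2.le⟩)]
    · rw [hqzero x hx s hsIoo]
      ring
  -- the integral representation of v
  have hGzero : ∀ x ∈ Set.Icc xl xu, ∀ s : ℝ, s ∉ Set.Ioo (al x) (au x) → G x s = 0 := by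
    intro x hx s hs
    rw [hGdef]
    show Fc (x, s) * Real.exp (-(lam * s)) = 0
    rw [hFc_eq x hx s, hqzero x hx s hs]
    ring
  have hvB : ∀ x ∈ Set.Icc xl xu, ∀ a : ℝ, a ≤ B →
      v x a = Real.exp (lam * a) * ∫ s in a..B, G x s := by
    intro x hx a haB
    have h1 : v x a = ∫ s in Set.Ioi a, Real.exp (lam * a) * G x s := by
      rw [hv x a]
      refine integral_congr_ae (Filter.Eventually.of_forall fun s => ?_)
      show 2 * q x s * vt (fl s x / 2) * Real.exp (-(lam * (s - a)))
          = Real.exp (lam * a) * G x s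
      have hGs : G x s = Fc (x, s) * Real.exp (-(lam * s)) := rfl
      rw [hGs, hFc_eq x hx s,
        show Real.exp (-(lam * (s - a))) = Real.exp (lam * a) * Real.exp (-(lam * s)) by
          rw [← Real.exp_add]; ring_nf]
      ring
    rw [h1, MeasureTheory.integral_const_mul]
    congr 1
    have hzero : Set.EqOn (G x) (fun _ => (0:ℝ)) (Set.Ioi B) := by
      intro s hs
      refine hGzero x hx s (fun hc => ?_)
      have := hB x hx
      simp only [Set.mem_Ioi] at hs
      linarith [hc.2]
    have hintB : IntegrableOn (G x) (Set.Ioi B) volume :=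
      (integrableOn_congr_fun hzero measurableSet_Ioi).2 (integrableOn_zero)
    have hI0 : ∫ s in Set.Ioi B, G x s = 0 := by
      rw [MeasureTheory.setIntegral_congr_fun measurableSet_Ioi hzero]
      simp
    rw [intervalIntegral.integral_of_le haB, ← Set.Ioc_union_Ioi_eq_Ioi haB,
      MeasureTheory.setIntegral_union (Set.Ioc_disjoint_Ioi le_rfl) measurableSet_Ioi
        ((hGcont x).intervalIntegrable a B).1 hintB,
      hI0, add_zero]
  -- Statement 2 : v x 0 = vt x
  have hstmt2 : ∀ x ∈ Set.Icc xl xu, v x 0 = vt x := by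
    intro x hx
    rw [hvB x hx 0 hB0.le, mul_zero, Real.exp_zero, one_mul]
    have hal0 : (0:ℝ) ≤ al x := (hbounds x hx).1.le
    have halau : al x ≤ au x := (hbounds x hx).2.le
    have hauB : au x ≤ B := (hB x hx).le
    have hii : ∀ a b : ℝ, IntervalIntegrable (G x) volume a b := fun a b =>
      (hGcont x).intervalIntegrable a b
    have hz1 : ∫ s in (0:ℝ)..(al x), G x s = 0 := by
      have heq : Set.EqOn (G x) (fun _ => (0:ℝ)) (Set.uIcc 0 (al x)) := by
        intro s hs
        rw [Set.uIcc_of_le hal0] at hs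
        exact hGzero x hx s (fun hc => absurd hc.1 (not_lt.2 hs.2))
      rw [intervalIntegral.integral_congr heq]
      simp
    have hz3 : ∫ s in (au x)..B, G x s = 0 := by
      have heq : Set.EqOn (G x) (fun _ => (0:ℝ)) (Set.uIcc (au x) B) := by
        intro s hs
        rw [Set.uIcc_of_le hauB] at hs
        exact hGzero x hx s (fun hc => absurd hc.2 (not_lt.2 hs.1))
      rw [intervalIntegral.integral_congr heq]
      simp
    have hmid : ∫ s in (al x)..(au x), G x s = vt x := by
      rw [← hvtfix x hx]
      apply intervalIntegral.integral_congr
      intro s hs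
      show G x s = 2 * Real.exp (-(lam * s)) * q x s * vt (fl s x / 2)
      have hGs : G x s = Fc (x, s) * Real.exp (-(lam * s)) := rfl
      rw [hGs, hFc_eq x hx s]
      ring
    have hsplit1 := intervalIntegral.integral_add_adjacent_intervals
      (hii 0 (al x)) (hii (al x) B)
    have hsplit2 := intervalIntegral.integral_add_adjacent_intervals
      (hii (al x) (au x)) (hii (au x) B)
    rw [← hsplit1, hz1, zero_add, ← hsplit2, hz3, add_zero, hmid]
  -- Statement 3 : v x (au x) = 0
  have hstmt3 : ∀ x ∈ Set.Icc xl xu, v x (au x) = 0 := by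
    intro x hx
    rw [hv x (au x)]
    have heq : Set.EqOn
        (fun s => 2 * q x s * vt (fl s x / 2) * Real.exp (-(lam * (s - au x))))
        (fun _ => (0:ℝ)) (Set.Ioi (au x)) := by
      intro s hs
      simp only [Set.mem_Ioi] at hs
      show 2 * q x s * vt (fl s x / 2) * Real.exp (-(lam * (s - au x))) = 0
      rw [hqzero x hx s (fun hc => absurd hc.2 (not_lt.2 hs.le))]
      ring
    rw [MeasureTheory.setIntegral_congr_fun measurableSet_Ioi heq]
    simp
  -- Statement 4 : the derivative
  have hstmt4 : ∀ x ∈ Set.Icc xl xu, ∀ a ∈ Set.Icc (0:ℝ) (au x),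
      HasDerivAt (v x) (lam * v x a - 2 * q x a * vt (fl a x / 2)) a := by
    intro x hx a ha
    have haB : a < B := lt_of_le_of_lt ha.2 (hB x hx)
    have hloc : (fun a' => Real.exp (lam * a') * ∫ s in a'..B, G x s) =ᶠ[nhds a] v x := by
      filter_upwards [Iio_mem_nhds haB] with b hb
      exact (hvB x hx b (le_of_lt hb)).symm
    have hint : IntervalIntegrable (G x) volume a B := (hGcont x).intervalIntegrable a B
    have hI : HasDerivAt (fun u => ∫ s in u..B, G x s) (-(G x a)) a :=
      intervalIntegral.integral_hasDerivAt_left hint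
        ((hGcont x).stronglyMeasurableAtFilter _ _) (hGcont x).continuousAt
    have h1 : HasDerivAt (fun u : ℝ => lam * u) lam a := by
      simpa using (hasDerivAt_id a).const_mul lam
    have hexp := h1.exp
    have hprod := hexp.mul hI
    have hfinal := hprod.congr_of_eventuallyEq hloc.symm
    refine hfinal.congr_deriv (Eq.symm ?_)
    have hva : v x a = Real.exp (lam * a) * ∫ s in a..B, G x s := hvB x hx a haB.le
    have hGa : G x a = Fc (x, a) * Real.exp (-(lam * a)) := rfl
    have hee : Real.exp (lam * a) * Real.exp (-(lam * a)) = 1 := by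
      rw [← Real.exp_add]; simp
    rw [hva, ← hFc_eq x hx a, hGa]
    set I := ∫ s in a..B, G x s with hIdef
    linear_combination Fc (x, a) * hee
  -- Statement 1 : joint continuity of v on X
  have hu : Continuous (fun w : (ℝ × ℝ) × ℝ => G w.1.1 w.2) := by
    have : (fun w : (ℝ × ℝ) × ℝ => G w.1.1 w.2)
        = Gc ∘ (fun w : (ℝ × ℝ) × ℝ => (w.1.1, w.2)) := rfl
    rw [this]
    exact hGccont.comp (by fun_prop)
  have hpar : Continuous (fun p : ℝ × ℝ => ∫ s in B..p.2, G p.1 s) :=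
    intervalIntegral.continuous_parametric_intervalIntegral_of_continuous
      (f := fun (p : ℝ × ℝ) s => G p.1 s) (μ := volume) hu continuous_snd
  have hΦ : Continuous (fun p : ℝ × ℝ => Real.exp (lam * p.2) * ∫ s in p.2..B, G p.1 s) := by
    apply Continuous.mul (by fun_prop)
    have heq : (fun p : ℝ × ℝ => ∫ s in p.2..B, G p.1 s)
        = fun p : ℝ × ℝ => -∫ s in B..p.2, G p.1 s :=
      funext fun p => intervalIntegral.integral_symm _ _
    rw [heq]
    exact hpar.neg
  have hXmem : ∀ p : ℝ × ℝ, p ∈ X → p.1 ∈ Set.Icc xl xu ∧ p.2 ≤ B := by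
    intro p hp
    rw [hX, Set.mem_setOf_eq] at hp
    exact ⟨⟨hp.1, hp.2.1⟩, le_trans hp.2.2.2 (hB p.1 ⟨hp.1, hp.2.1⟩).le⟩
  have hstmt1 : ContinuousOn (fun p : ℝ × ℝ => v p.1 p.2) X := by
    apply hΦ.continuousOn.congr
    intro p hp
    obtain ⟨hpx, hpB⟩ := hXmem p hp
    exact hvB p.1 hpx p.2 hpB
  -- Statement 5
  have hstmt5 : ContinuousOn
      (fun p : ℝ × ℝ => lam * v p.1 p.2 - 2 * q p.1 p.2 * vt (fl p.2 p.1 / 2)) X := by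
    have hcand : Continuous (fun p : ℝ × ℝ =>
        lam * (Real.exp (lam * p.2) * ∫ s in p.2..B, G p.1 s) - Fc p) :=
      (continuous_const.mul hΦ).sub hFccont
    apply hcand.continuousOn.congr
    intro p hp
    obtain ⟨hpx, hpB⟩ := hXmem p hp
    show lam * v p.1 p.2 - 2 * q p.1 p.2 * vt (fl p.2 p.1 / 2) = _
    rw [hvB p.1 hpx p.2 hpB, ← hFc_eq p.1 hpx p.2]
  exact ⟨hstmt1, hstmt2, hstmt3, hstmt4, hstmt5⟩
end

section
/- For every λ ≥ 0 and every ṽ ∈ C([x̲, x̄]), the operator K_λ can be written as an integral operator with continuous kernel: K_λ ṽ(x_b) = ∫_{x̲}^{x̄} k_λ(x_b, y) ṽ(y) dy, where k_λ(x_b, y) = 4 e^{−λ a(y; x_b)} q(x_b, a(y; x_b)) / g(2y) and a(y; x_b) = ∫_{x_b}^{2y} dr / g(r) (with the convention q(x_b, t) = 0 for t ≤ 0). -/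
open MeasureTheory

private lemma barrier_le {h g : ℝ → ℝ} {c T : ℝ}
    (hd : ∀ a, HasDerivAt h (g (h a)) a)
    (hgc : 0 < g c) (hT : h T ≤ c) :
    ∀ t, t ≤ T → h t ≤ c := by
  intro t ht
  by_contra hcon
  push_neg at hcon
  have hcont : Continuous h := by
    rw [continuous_iff_continuousAt]; exact fun a => (hd a).continuousAt
  set S : Set ℝ := Set.Icc t T ∩ {s | h s ≤ c} with hSdef
  have hSc : IsClosed S := isClosed_Icc.inter (isClosed_le hcont continuous_const)
  have hSne : S.Nonempty := ⟨T, Set.right_mem_Icc.2 ht, hT⟩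
  have hSbdd : BddBelow S := ⟨t, fun s hs => hs.1.1⟩
  set t2 := sInf S with ht2def
  have ht2S : t2 ∈ S := hSc.csInf_mem hSne hSbdd
  have htt2 : t < t2 := by
    rcases lt_or_eq_of_le ht2S.1.1 with hlt | heq
    · exact hlt
    · exact absurd (heq ▸ ht2S.2) (not_le.2 hcon)
  have hless : ∀ s, t ≤ s → s < t2 → c < h s := by
    intro s hts hst2
    by_contra hns
    push_neg at hns
    exact absurd (csInf_le hSbdd ⟨⟨hts, hst2.le.trans ht2S.1.2⟩, hns⟩) (not_le.2 hst2)
  have ht2c : h t2 = c := by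
    refine le_antisymm ht2S.2 ?_
    have htend : Filter.Tendsto h (nhdsWithin t2 (Set.Iio t2)) (nhds (h t2)) :=
      hcont.continuousAt.continuousWithinAt.tendsto
    refine ge_of_tendsto htend ?_
    filter_upwards [Ico_mem_nhdsLT_of_mem (Set.right_mem_Ioc.mpr htt2)] with s hs
    exact (hless s hs.1 hs.2).le
  have hd2 : HasDerivAt h (g c) t2 := ht2c ▸ hd t2
  have hslope : Filter.Tendsto (slope h t2) (nhdsWithin t2 {t2}ᶜ) (nhds (g c)) :=
    hasDerivAt_iff_tendsto_slope.1 hd2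
  have h1 : ∀ᶠ s in nhdsWithin t2 (Set.Iio t2), 0 < slope h t2 s :=
    (hslope.eventually (eventually_gt_nhds hgc)).filter_mono
      (nhdsWithin_mono t2 (fun s hs => Set.mem_compl_singleton_iff.mpr (ne_of_lt hs)))
  have h2 : ∀ᶠ s in nhdsWithin t2 (Set.Iio t2), s ∈ Set.Ico t t2 :=
    Ico_mem_nhdsLT_of_mem (Set.right_mem_Ioc.mpr htt2)
  obtain ⟨s, hs1, hs2⟩ := (h1.and h2).exists
  have hst2 : s < t2 := hs2.2
  simp only [slope_def_field] at hs1
  have hnum : h s - h t2 < 0 := by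
    rcases div_pos_iff.1 hs1 with ⟨hn, hden⟩ | ⟨hn, hden⟩
    · exact absurd hden (not_lt.2 (by linarith))
    · exact hn
  have := hless s hs2.1 hst2
  linarith [ht2c ▸ hnum]

private lemma barrier_ge {h g : ℝ → ℝ} {c t0 : ℝ}
    (hd : ∀ a, HasDerivAt h (g (h a)) a)
    (hgc : 0 < g c) (h0 : c ≤ h t0) :
    ∀ t, t0 ≤ t → c ≤ h t := by
  intro t ht
  by_contra hcon
  push_neg at hcon
  have hcont : Continuous h := by
    rw [continuous_iff_continuousAt]; exact fun a => (hd a).continuousAt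
  set S : Set ℝ := Set.Icc t0 t ∩ {s | c ≤ h s} with hSdef
  have hSc : IsClosed S := isClosed_Icc.inter (isClosed_le continuous_const hcont)
  have hSne : S.Nonempty := ⟨t0, Set.left_mem_Icc.2 ht, h0⟩
  have hSbdd : BddAbove S := ⟨t, fun s hs => hs.1.2⟩
  set t1 := sSup S with ht1def
  have ht1S : t1 ∈ S := hSc.csSup_mem hSne hSbdd
  have ht1t : t1 < t := by
    rcases lt_or_eq_of_le ht1S.1.2 with hlt | heq
    · exact hlt
    · exact absurd (heq ▸ ht1S.2) (not_le.2 hcon)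
  have hless : ∀ s, t1 < s → s ≤ t → h s < c := by
    intro s ht1s hst
    by_contra hns
    push_neg at hns
    exact absurd (le_csSup hSbdd ⟨⟨ht1S.1.1.trans ht1s.le, hst⟩, hns⟩) (not_le.2 ht1s)
  have ht1c : h t1 = c := by
    refine le_antisymm ?_ ht1S.2
    have htend : Filter.Tendsto h (nhdsWithin t1 (Set.Ioi t1)) (nhds (h t1)) :=
      hcont.continuousAt.continuousWithinAt.tendsto
    refine le_of_tendsto htend ?_
    filter_upwards [Ioc_mem_nhdsGT_of_mem (Set.left_mem_Ico.mpr ht1t)] with s hs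
    exact (hless s hs.1 hs.2).le
  have hd2 : HasDerivAt h (g c) t1 := ht1c ▸ hd t1
  have hslope : Filter.Tendsto (slope h t1) (nhdsWithin t1 {t1}ᶜ) (nhds (g c)) :=
    hasDerivAt_iff_tendsto_slope.1 hd2
  have h1 : ∀ᶠ s in nhdsWithin t1 (Set.Ioi t1), 0 < slope h t1 s :=
    (hslope.eventually (eventually_gt_nhds hgc)).filter_mono
      (nhdsWithin_mono t1 (fun s hs => Set.mem_compl_singleton_iff.mpr (ne_of_gt hs)))
  have h2 : ∀ᶠ s in nhdsWithin t1 (Set.Ioi t1), s ∈ Set.Ioc t1 t :=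
    Ioc_mem_nhdsGT_of_mem (Set.left_mem_Ico.mpr ht1t)
  obtain ⟨s, hs1, hs2⟩ := (h1.and h2).exists
  simp only [slope_def_field] at hs1
  have hnum : 0 < h s - h t1 := by
    rcases div_pos_iff.1 hs1 with ⟨hn, hden⟩ | ⟨hn, hden⟩
    · exact hn
    · exact absurd hden (not_lt.2 (by linarith [hs2.1]))
  have := hless s hs2.1 hs2.2
  linarith [ht1c ▸ hnum]


/-- `K_λ` is an integral operator with the continuous kernel
`k_λ(x_b,y) = 4 e^{-λ a(y;x_b)} q(x_b, a(y;x_b)) / g(2y)`, where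
`a(y;x_b) = ∫_{x_b}^{2y} dr/g(r)`.  `fl r x` is the flow `π_r x` of `x' = g(x)`. -/
theorem K_is_integral_operator_with_continuous_kernel
    (xl xu : ℝ) (hxl : 0 < xl) (hxu : xl < xu)
    (g : ℝ → ℝ) (hg : ContDiffOn ℝ 1 g (Set.Icc xl (2 * xu)))
    (hgpos : ∀ x ∈ Set.Icc xl (2 * xu), 0 < g x)
    (fl : ℝ → ℝ → ℝ)
    (hfl0 : ∀ x, fl 0 x = x)
    (hflderiv : ∀ a x, HasDerivAt (fun s => fl s x) (g (fl a x)) a)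
    (q : ℝ → ℝ → ℝ)
    (hqcont : ContinuousOn (fun p : ℝ × ℝ => q p.1 p.2) (Set.Icc xl xu ×ˢ Set.univ))
    (hqnn : ∀ x a, 0 ≤ q x a)
    (al au : ℝ → ℝ)
    (halcont : ContinuousOn al (Set.Icc xl xu)) (haucont : ContinuousOn au (Set.Icc xl xu))
    (hbounds : ∀ x ∈ Set.Icc xl xu, 0 < al x ∧ al x < au x)
    (hqdens : ∀ x ∈ Set.Icc xl xu, ∫ a, q x a = 1)
    (hqpos : ∀ x ∈ Set.Icc xl xu, ∀ a ∈ Set.Ioo (al x) (au x), 0 < q x a)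
    (hqzero : ∀ x ∈ Set.Icc xl xu, ∀ a, a ∉ Set.Ioo (al x) (au x) → q x a = 0)
    (hA5 : ∀ x ∈ Set.Icc xl xu, xl ≤ fl (al x) x / 2 ∧ fl (au x) x / 2 ≤ xu)
    (lam : ℝ) (hlam : 0 ≤ lam)
    -- the kernel `k_λ`
    (k : ℝ → ℝ → ℝ)
    (hk : ∀ x y, k x y
      = 4 * Real.exp (-(lam * ∫ r in x..(2 * y), 1 / g r))
          * q x (∫ r in x..(2 * y), 1 / g r) / g (2 * y)) :
    ContinuousOn (fun p : ℝ × ℝ => k p.1 p.2) (Set.Icc xl xu ×ˢ Set.Icc xl xu)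
    ∧ ∀ vt : ℝ → ℝ, ContinuousOn vt (Set.Icc xl xu) →
        ∀ x ∈ Set.Icc xl xu,
          (∫ a in al x..au x, 2 * Real.exp (-(lam * a)) * q x a * vt (fl a x / 2))
            = ∫ y in xl..xu, k x y * vt y := by
  have hxu0 : 0 < xu := hxl.trans hxu
  have hxl2xu : xl ≤ 2 * xu := by linarith
  have hsub : Set.Icc xl xu ⊆ Set.Icc xl (2 * xu) := Set.Icc_subset_Icc_right (by linarith)
  -- clamped version of g, continuous and positive on all of ℝ
  set cl : ℝ → ℝ := fun r => max xl (min r (2 * xu)) with hcldef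
  have hclmem : ∀ r, cl r ∈ Set.Icc xl (2 * xu) :=
    fun r => ⟨le_max_left _ _, max_le hxl2xu (min_le_right _ _)⟩
  have hcleq : ∀ r ∈ Set.Icc xl (2 * xu), cl r = r := fun r hr => by
    simp only [hcldef, min_eq_left hr.2, max_eq_right hr.1]
  have hclcont : Continuous cl := continuous_const.max (continuous_id.min continuous_const)
  set G : ℝ → ℝ := fun r => g (cl r) with hGdef
  have hGcont : Continuous G := hg.continuousOn.comp_continuous hclcont hclmem
  have hGpos : ∀ r, 0 < G r := fun r => hgpos _ (hclmem r)
  have hGeq : ∀ r ∈ Set.Icc xl (2 * xu), G r = g r := fun r hr => congrArg g (hcleq r hr)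
  have hinv : Continuous fun r => 1 / G r :=
    continuous_const.div hGcont fun r => (hGpos r).ne'
  -- antiderivative of 1/G
  set H : ℝ → ℝ := fun t => ∫ r in xl..t, 1 / G r with hHdef
  have hHderiv : ∀ t : ℝ, HasDerivAt H (1 / G t) t := fun t =>
    intervalIntegral.integral_hasDerivAt_right (hinv.intervalIntegrable _ _)
      hinv.aestronglyMeasurable.stronglyMeasurableAtFilter hinv.continuousAt
  have hHcont : Continuous H := by
    rw [continuous_iff_continuousAt]; exact fun t => (hHderiv t).continuousAt
  have hHmono : StrictMono H := by
    apply strictMono_of_deriv_pos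
    intro t
    rw [(hHderiv t).deriv]
    exact div_pos one_pos (hGpos t)
  -- the kernel integrals agree with H-differences on the relevant range
  have hIeq : ∀ a b : ℝ, a ∈ Set.Icc xl (2 * xu) → b ∈ Set.Icc xl (2 * xu) →
      (∫ r in a..b, 1 / g r) = H b - H a := by
    intro a b ha hb
    have h1 : (∫ r in a..b, 1 / g r) = ∫ r in a..b, 1 / G r := by
      apply intervalIntegral.integral_congr
      intro r hr
      simp only [hGeq r (Set.uIcc_subset_Icc ha hb hr)]
    rw [h1, hHdef]
    rw [← intervalIntegral.integral_interval_sub_left (hinv.intervalIntegrable xl b)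
      (hinv.intervalIntegrable xl a)]
  -- membership facts
  have hmem2 : ∀ y ∈ Set.Icc xl xu, 2 * y ∈ Set.Icc xl (2 * xu) := by
    intro y hy
    exact ⟨by linarith [hy.1, hxl.le], by linarith [hy.2]⟩
  -- continuity of the kernel
  have hkcont : ContinuousOn (fun p : ℝ × ℝ => k p.1 p.2)
      (Set.Icc xl xu ×ˢ Set.Icc xl xu) := by
    have hA : Continuous fun p : ℝ × ℝ => H (2 * p.2) - H p.1 :=
      (hHcont.comp (continuous_const.mul continuous_snd)).sub (hHcont.comp continuous_fst)
    have hqA : ContinuousOn (fun p : ℝ × ℝ => q p.1 (H (2 * p.2) - H p.1))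
        (Set.Icc xl xu ×ˢ Set.Icc xl xu) :=
      ContinuousOn.comp hqcont ((continuous_fst.prodMk hA).continuousOn)
        (fun p hp => Set.mem_prod.2 ⟨(Set.mem_prod.1 hp).1, Set.mem_univ _⟩)
    have hgden : ContinuousOn (fun p : ℝ × ℝ => g (2 * p.2))
        (Set.Icc xl xu ×ˢ Set.Icc xl xu) :=
      ContinuousOn.comp hg.continuousOn ((continuous_const.mul continuous_snd).continuousOn)
        (fun p hp => hmem2 p.2 (Set.mem_prod.1 hp).2)
    have hexp : Continuous fun p : ℝ × ℝ => Real.exp (-(lam * (H (2 * p.2) - H p.1))) :=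
      Real.continuous_exp.comp ((continuous_const.mul hA).neg)
    have hbig : ContinuousOn (fun p : ℝ × ℝ =>
        4 * Real.exp (-(lam * (H (2 * p.2) - H p.1))) * q p.1 (H (2 * p.2) - H p.1)
          / g (2 * p.2)) (Set.Icc xl xu ×ˢ Set.Icc xl xu) :=
      (((continuous_const.mul hexp).continuousOn).mul hqA).div hgden
        (fun p hp => (hgpos _ (hmem2 p.2 (Set.mem_prod.1 hp).2)).ne')
    apply hbig.congr
    intro p hp
    have hmp := Set.mem_prod.1 hp
    simp only [hk p.1 p.2, hIeq p.1 (2 * p.2) (hsub hmp.1) (hmem2 p.2 hmp.2)]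
  refine ⟨hkcont, ?_⟩
  intro vt hvt x hx
  have hx2 : x ∈ Set.Icc xl (2 * xu) := hsub hx
  have hflcont : Continuous fun s => fl s x := by
    rw [continuous_iff_continuousAt]; exact fun a => (hflderiv a x).continuousAt
  obtain ⟨hal0, halau⟩ := hbounds x hx
  obtain ⟨hyl, hyu⟩ := hA5 x hx
  -- invariance of the region under the flow
  have hup : ∀ a, a ≤ au x → fl a x ≤ 2 * xu :=
    barrier_le (fun a => hflderiv a x) (hgpos _ ⟨hxl2xu, le_refl _⟩) (by linarith)
  have hlo : ∀ a, (0:ℝ) ≤ a → xl ≤ fl a x :=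
    barrier_ge (fun a => hflderiv a x) (hgpos xl ⟨le_refl _, hxl2xu⟩)
      (by rw [hfl0]; exact hx.1)
  have hlo2 : ∀ a, al x ≤ a → 2 * xl ≤ fl a x :=
    barrier_ge (fun a => hflderiv a x) (hgpos (2*xl) ⟨by linarith, by linarith⟩)
      (by linarith)
  have hmem : ∀ a ∈ Set.Icc (0:ℝ) (au x), fl a x ∈ Set.Icc xl (2*xu) :=
    fun a ha => ⟨hlo a ha.1, hup a ha.2⟩
  -- the time identity:  H (fl a x) - H x = a
  have hphi : ∀ a ∈ Set.Icc (0:ℝ) (au x), H (fl a x) - H x = a := by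
    have key := constant_of_has_deriv_right_zero
      (f := fun a => H (fl a x) - H x - a) (a := (0:ℝ)) (b := au x)
      ((((hHcont.comp hflcont).sub continuous_const).sub continuous_id).continuousOn)
      (fun a ha => by
        have hda : HasDerivAt (fun a => H (fl a x) - H x - a)
            (1 / G (fl a x) * g (fl a x) - 1) a :=
          (((hHderiv (fl a x)).comp (h := fun s => fl s x) a (hflderiv a x)).sub_const (H x)).sub (hasDerivAt_id a)
        have hGg : G (fl a x) = g (fl a x) := hGeq _ (hmem a ⟨ha.1, ha.2.le⟩)
        have hzero : 1 / G (fl a x) * g (fl a x) - 1 = 0 := by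
          rw [hGg, one_div, inv_mul_cancel₀ (hgpos _ (hmem a ⟨ha.1, ha.2.le⟩)).ne', sub_self]
        exact (hzero ▸ hda).hasDerivWithinAt)
    intro a ha
    have h2 := key a ha
    simp only [hfl0 x, sub_self, zero_sub, sub_zero, neg_zero] at h2
    linarith [h2]
  set yl := fl (al x) x / 2 with hyldef
  set yu := fl (au x) x / 2 with hyudef
  have hphial : H (fl (al x) x) - H x = al x := hphi _ ⟨hal0.le, halau.le⟩
  have hphiau : H (fl (au x) x) - H x = au x := hphi _ ⟨(hal0.trans halau).le, le_refl _⟩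
  have hylyu : yl < yu := by
    have hlt : H (fl (al x) x) < H (fl (au x) x) := by linarith
    have := hHmono.lt_iff_lt.1 hlt
    rw [hyldef, hyudef]; linarith
  have hylmem : yl ∈ Set.Icc xl xu := by
    constructor
    · exact hyl
    · have := hup (al x) halau.le
      rw [hyldef]; linarith
  have hyumem : yu ∈ Set.Icc xl xu := by
    constructor
    · have := hlo2 (au x) halau.le
      rw [hyudef]; linarith
    · exact hyu
  set F := fun y => k x y * vt y with hFdef
  have hFcont : ContinuousOn F (Set.Icc xl xu) := by
    have h1 : ContinuousOn (fun y => k x y) (Set.Icc xl xu) :=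
      ContinuousOn.comp (g := fun p : ℝ × ℝ => k p.1 p.2) (f := fun y : ℝ => (x, y))
        hkcont ((continuous_const.prodMk continuous_id).continuousOn)
        (fun y hy => Set.mem_prod.2 ⟨hx, hy⟩)
    exact h1.mul hvt
  have hmemI : ∀ a ∈ Set.uIcc (al x) (au x), fl a x ∈ Set.Icc (2*xl) (2*xu) := by
    intro a ha
    rw [Set.uIcc_of_le halau.le] at ha
    exact ⟨hlo2 a ha.1, hup a ha.2⟩
  -- change of variables
  have hf'cont : ContinuousOn (fun a => g (fl a x) / 2) (Set.uIcc (al x) (au x)) := by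
    apply ContinuousOn.div_const
    exact hg.continuousOn.comp hflcont.continuousOn
      (fun a ha => Set.Icc_subset_Icc (by linarith) (le_refl _) (hmemI a ha))
  have himg : (fun a => fl a x / 2) '' Set.uIcc (al x) (au x) ⊆ Set.Icc xl xu := by
    rintro _ ⟨a, ha, rfl⟩
    have h2 := hmemI a ha
    exact ⟨by linarith [h2.1], by linarith [h2.2]⟩
  have hsubst : (∫ a in al x..au x, (g (fl a x) / 2) • F (fl a x / 2))
      = ∫ y in yl..yu, F y := by
    have hcomp := intervalIntegral.integral_comp_smul_deriv''
      (f := fun a => fl a x / 2) (f' := fun a => g (fl a x) / 2) (g := F)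
      (a := al x) (b := au x)
      ((hflcont.div_const 2).continuousOn)
      (fun a _ => ((hflderiv a x).div_const 2).hasDerivWithinAt)
      hf'cont (hFcont.mono himg)
    simpa using hcomp
  have hLHS : (∫ a in al x..au x, 2 * Real.exp (-(lam * a)) * q x a * vt (fl a x / 2))
      = ∫ a in al x..au x, (g (fl a x) / 2) • F (fl a x / 2) := by
    apply intervalIntegral.integral_congr
    intro a ha
    rw [Set.uIcc_of_le halau.le] at ha
    have hamem : a ∈ Set.Icc (0:ℝ) (au x) := ⟨hal0.le.trans ha.1, ha.2⟩
    have hfa : fl a x ∈ Set.Icc xl (2*xu) := hmem a hamem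
    have hgfa : 0 < g (fl a x) := hgpos _ hfa
    have h2a : 2 * (fl a x / 2) = fl a x := by ring
    have hIa : (∫ r in x..(fl a x), 1 / g r) = a := by
      rw [hIeq x (fl a x) hx2 hfa]
      exact hphi a hamem
    show 2 * Real.exp (-(lam * a)) * q x a * vt (fl a x / 2)
      = (g (fl a x) / 2) • F (fl a x / 2)
    simp only [hFdef]
    rw [hk x (fl a x / 2), h2a, hIa, smul_eq_mul]
    field_simp
    ring
  -- the kernel vanishes outside [yl, yu]
  have hk0l : ∀ y ∈ Set.uIcc xl yl, F y = 0 := by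
    intro y hy
    rw [Set.uIcc_of_le hylmem.1] at hy
    have hymem : y ∈ Set.Icc xl xu := ⟨hy.1, hy.2.trans hylmem.2⟩
    have hIy : (∫ r in x..(2*y), 1 / g r) = H (2*y) - H x :=
      hIeq x (2*y) hx2 (hmem2 y hymem)
    have hle : H (2*y) - H x ≤ al x := by
      have h2 : H (2*y) ≤ H (fl (al x) x) := hHmono.le_iff_le.2 (by
        have := hy.2
        rw [hyldef] at this
        linarith)
      linarith
    have hq0 : q x (H (2*y) - H x) = 0 :=
      hqzero x hx _ (fun hc => absurd hc.1 (not_lt.2 hle))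
    simp only [hFdef]
    rw [hk x y, hIy, hq0]
    ring
  have hk0r : ∀ y ∈ Set.uIcc yu xu, F y = 0 := by
    intro y hy
    rw [Set.uIcc_of_le hyumem.2] at hy
    have hymem : y ∈ Set.Icc xl xu := ⟨hyumem.1.trans hy.1, hy.2⟩
    have hIy : (∫ r in x..(2*y), 1 / g r) = H (2*y) - H x :=
      hIeq x (2*y) hx2 (hmem2 y hymem)
    have hge : au x ≤ H (2*y) - H x := by
      have h2 : H (fl (au x) x) ≤ H (2*y) := hHmono.le_iff_le.2 (by
        have := hy.1
        rw [hyudef] at this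
        linarith)
      linarith
    have hq0 : q x (H (2*y) - H x) = 0 :=
      hqzero x hx _ (fun hc => absurd hc.2 (not_lt.2 hge))
    simp only [hFdef]
    rw [hk x y, hIy, hq0]
    ring
  have hInt : ∀ a b : ℝ, a ∈ Set.Icc xl xu → b ∈ Set.Icc xl xu →
      IntervalIntegrable F volume a b :=
    fun a b ha hb => (hFcont.mono (Set.uIcc_subset_Icc ha hb)).intervalIntegrable
  have hxlmem : xl ∈ Set.Icc xl xu := ⟨le_refl _, hxu.le⟩
  have hxumem : xu ∈ Set.Icc xl xu := ⟨hxu.le, le_refl _⟩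
  have hz1 : (∫ y in xl..yl, F y) = 0 := by
    rw [intervalIntegral.integral_congr (g := fun _ => (0:ℝ)) hk0l]
    simp
  have hz2 : (∫ y in yu..xu, F y) = 0 := by
    rw [intervalIntegral.integral_congr (g := fun _ => (0:ℝ)) hk0r]
    simp
  have hsplit1 : (∫ y in xl..yl, F y) + (∫ y in yl..yu, F y) = ∫ y in xl..yu, F y :=
    intervalIntegral.integral_add_adjacent_intervals (hInt _ _ hxlmem hylmem)
      (hInt _ _ hylmem hyumem)
  have hsplit2 : (∫ y in xl..yu, F y) + (∫ y in yu..xu, F y) = ∫ y in xl..xu, F y :=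
    intervalIntegral.integral_add_adjacent_intervals (hInt _ _ hxlmem hyumem)
      (hInt _ _ hyumem hxumem)
  rw [hLHS, hsubst, ← hsplit2, ← hsplit1, hz1, hz2]
  ring
end

section
/- Assume additionally that g(2x) = 2 g(x) for every x with x, 2x ∈ [x̲, 2x̄]. Fix t > 0 and x_b, and assume that all flows below remain in [x̲, 2x̄]. Then the function a ↦ π_{t−a}(½ π_a x_b) is constant on [0, t]; in particular π_{t−a}(½ π_a x_b) = ½ π_t x_b for every a ∈ [0, t]. (Biologically: the size at time t of a daughter cell is exactly half the size the mother would have at time t, independently of the division age a.) -/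
open MeasureTheory

/-- if `g(2x) = 2g(x)` then the size at time `t` of a daughter cell,
`π_{t-a}(½ π_a x_b)`, does not depend on the division age `a ∈ [0,t]` and equals `½ π_t x_b`.
`fl r x` is the flow `π_r x` of `x' = g(x)`. -/
theorem daughter_size_constant_when_g_two_homogeneous
    (xl xu : ℝ) (hxl : 0 < xl) (hxu : xl < xu)
    (g : ℝ → ℝ) (hg : ContDiff ℝ 1 g)
    (hgpos : ∀ x ∈ Set.Icc xl (2 * xu), 0 < g x)
    (fl : ℝ → ℝ → ℝ)
    (hfl0 : ∀ x, fl 0 x = x)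
    (hfladd : ∀ s t x, fl s (fl t x) = fl (s + t) x)
    (hflderiv : ∀ a x, HasDerivAt (fun s => fl s x) (g (fl a x)) a)
    -- `g(2x) = 2 g(x)` whenever `x` and `2x` lie in `[x̲, 2x̄]`
    (hg2 : ∀ x, x ∈ Set.Icc xl (2 * xu) → 2 * x ∈ Set.Icc xl (2 * xu) → g (2 * x) = 2 * g x)
    (t : ℝ) (ht : 0 < t) (xb : ℝ) (hxb : xb ∈ Set.Icc xl xu)
    -- all the flows involved remain in `[x̲, 2x̄]`
    (hdom1 : ∀ a ∈ Set.Icc (0:ℝ) t, fl a xb ∈ Set.Icc xl (2 * xu))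
    (hdom2 : ∀ a ∈ Set.Icc (0:ℝ) t, ∀ s ∈ Set.Icc (0:ℝ) (t - a),
      fl s (fl a xb / 2) ∈ Set.Icc xl (2 * xu)) :
    ∀ a ∈ Set.Icc (0:ℝ) t, fl (t - a) (fl a xb / 2) = fl t xb / 2 := by
  -- g is differentiable
  have hgdiff : Differentiable ℝ g := hg.differentiable one_ne_zero
  -- a Lipschitz-type bound for g on the compact set S = [xl, 4 xu]
  set S : Set ℝ := Set.Icc xl (4 * xu) with hS
  obtain ⟨L0, hL0⟩ : ∃ C, ∀ x ∈ S, ‖deriv g x‖ ≤ C :=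
    (isCompact_Icc).exists_bound_of_continuousOn
      ((hg.continuous_deriv le_rfl).continuousOn)
  set L : ℝ := max L0 0 with hLdef
  have hLnonneg : 0 ≤ L := le_max_right _ _
  have hLbound : ∀ x ∈ S, ‖deriv g x‖ ≤ L := fun x hx =>
    (hL0 x hx).trans (le_max_left _ _)
  have hLip : ∀ x ∈ S, ∀ y ∈ S, |g y - g x| ≤ L * |y - x| := by
    intro x hx y hy
    have := Convex.norm_image_sub_le_of_norm_deriv_le
      (f := g) (fun z _ => (hgdiff z)) hLbound (convex_Icc _ _) hx hy
    simpa [Real.norm_eq_abs] using this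
  have hxupos : 0 < xu := lt_trans hxl hxu
  intro a ha
  obtain ⟨ha0, hat⟩ := ha
  set c : ℝ := fl a xb / 2 with hc
  set T : ℝ := t - a with hT
  have hT0 : 0 ≤ T := by simp [hT]; linarith
  -- the error function
  set e : ℝ → ℝ := fun s => 2 * fl s c - fl (s + a) xb with he
  have he0 : e 0 = 0 := by
    simp [he, hfl0, hc, zero_add]
    ring
  -- derivative of e
  have hederiv : ∀ s, HasDerivAt e (2 * g (fl s c) - g (fl (s + a) xb)) s := by
    intro s
    have h1 : HasDerivAt (fun s => fl s c) (g (fl s c)) s := hflderiv s c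
    have h2 : HasDerivAt (fun s => fl (s + a) xb) (g (fl (s + a) xb)) s := by
      have := (hflderiv (s + a) xb).comp s ((hasDerivAt_id s).add_const a)
      rw [mul_one] at this; exact this
    exact ((h1.const_mul 2).sub h2)
  have hecont : ContinuousOn e (Set.Icc 0 T) :=
    fun s _ => ((hederiv s).continuousAt).continuousWithinAt
  -- the Gronwall bound on the derivative
  have hbound : ∀ s ∈ Set.Ico (0:ℝ) T,
      ‖2 * g (fl s c) - g (fl (s + a) xb)‖ ≤ (4 * L) * ‖e s‖ + 0 := by
    intro s hs
    obtain ⟨hs0, hsT⟩ := hs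
    have hz : fl s c ∈ Set.Icc xl (2 * xu) :=
      hdom2 a ⟨ha0, hat⟩ s ⟨hs0, le_of_lt hsT⟩
    have hy : fl (s + a) xb ∈ Set.Icc xl (2 * xu) := by
      refine hdom1 (s + a) ⟨by linarith, ?_⟩
      have : s < t - a := hsT
      linarith
    set z : ℝ := fl s c
    set y : ℝ := fl (s + a) xb
    set w : ℝ := min z xu with hw
    have hwIcc : w ∈ Set.Icc xl xu := ⟨le_min hz.1 (le_of_lt hxu), min_le_right _ _⟩
    have hgw : g (2 * w) = 2 * g w := by
      refine hg2 w ⟨hwIcc.1, by nlinarith [hwIcc.2]⟩ ⟨by nlinarith [hwIcc.1], by nlinarith [hwIcc.2]⟩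
    -- memberships in S
    have hzS : z ∈ S := ⟨hz.1, by nlinarith [hz.2]⟩
    have hwS : w ∈ S := ⟨hwIcc.1, by nlinarith [hwIcc.2]⟩
    have h2zS : (2 : ℝ) * z ∈ S := ⟨by nlinarith [hz.1], by nlinarith [hz.2]⟩
    have h2wS : (2 : ℝ) * w ∈ S := ⟨by nlinarith [hwIcc.1], by nlinarith [hwIcc.2]⟩
    have hyS : y ∈ S := ⟨hy.1, by nlinarith [hy.2]⟩
    -- key distance bound : z - w ≤ |e s| / 2
    have hzw : |z - w| ≤ |e s| / 2 := by
      rcases le_or_gt z xu with h | h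
      · simp [hw, min_eq_left h, abs_nonneg]
        positivity
      · have hwe : w = xu := min_eq_right (le_of_lt h)
        have hesdef : e s = 2 * z - y := rfl
        have h1 : z - w ≤ e s / 2 := by
          have hyle : y ≤ 2 * xu := hy.2
          rw [hwe, hesdef]; linarith
        have h2 : 0 ≤ z - w := by simp [hwe]; linarith
        rw [abs_of_nonneg h2]
        calc z - w ≤ e s / 2 := h1
          _ ≤ |e s| / 2 := by gcongr; exact le_abs_self _
    have hes : |e s| = |2 * z - y| := by rfl
    -- now estimate
    have t1 : |g z - g w| ≤ L * |e s| / 2 := by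
      have := hLip w hwS z hzS
      calc |g z - g w| ≤ L * |z - w| := this
        _ ≤ L * (|e s| / 2) := by
            exact mul_le_mul_of_nonneg_left hzw hLnonneg
        _ = L * |e s| / 2 := by ring
    have t2 : |g (2 * z) - g (2 * w)| ≤ L * |e s| := by
      have := hLip (2 * w) h2wS (2 * z) h2zS
      have habs : |2 * z - 2 * w| = 2 * |z - w| := by
        have h22 : (2:ℝ) * z - 2 * w = 2 * (z - w) := by ring
        rw [h22, abs_mul, abs_two]
      calc |g (2 * z) - g (2 * w)| ≤ L * |2 * z - 2 * w| := this
        _ = L * (2 * |z - w|) := by rw [habs]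
        _ ≤ L * (2 * (|e s| / 2)) := by
            refine mul_le_mul_of_nonneg_left ?_ hLnonneg
            linarith
        _ = L * |e s| := by ring
    have t3 : |g y - g (2 * z)| ≤ L * |e s| := by
      have := hLip (2 * z) h2zS y hyS
      have : |g y - g (2 * z)| ≤ L * |y - 2 * z| := this
      calc |g y - g (2 * z)| ≤ L * |y - 2 * z| := this
        _ = L * |e s| := by rw [hes, abs_sub_comm]
    -- combine
    have hdecomp : 2 * g z - g y
        = 2 * (g z - g w) - (g (2 * z) - g (2 * w)) - (g y - g (2 * z)) := by
      rw [hgw]; ring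
    rw [Real.norm_eq_abs, Real.norm_eq_abs]
    show |2 * g z - g y| ≤ 4 * L * |e s| + 0
    calc |2 * g z - g y|
        = |2 * (g z - g w) - (g (2 * z) - g (2 * w)) - (g y - g (2 * z))| := by rw [hdecomp]
      _ ≤ |2 * (g z - g w)| + |g (2 * z) - g (2 * w)| + |g y - g (2 * z)| := by
          exact (abs_sub _ _).trans (by gcongr; exact abs_sub _ _)
      _ = 2 * |g z - g w| + |g (2 * z) - g (2 * w)| + |g y - g (2 * z)| := by
          rw [abs_mul, abs_two]
      _ ≤ 2 * (L * |e s| / 2) + L * |e s| + L * |e s| := by gcongr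
      _ ≤ 4 * L * |e s| + 0 := by nlinarith [abs_nonneg (e s), hLnonneg]
  -- apply Gronwall
  have hgron := norm_le_gronwallBound_of_norm_deriv_right_le (δ := 0) (K := 4 * L) (ε := 0)
    hecont (fun s hs => (hederiv s).hasDerivWithinAt) (by simp [he0]) hbound
  have heT : e T = 0 := by
    have := hgron T ⟨hT0, le_refl T⟩
    rw [gronwallBound_ε0_δ0] at this
    have h0 : ‖e T‖ ≤ 0 := by simpa using this
    simpa using le_antisymm h0 (norm_nonneg _)
  have hfinal : 2 * fl T c - fl t xb = 0 := by
    have : fl (T + a) xb = fl t xb := by rw [hT]; ring_nf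
    simpa [he, this] using heT
  have : fl (t - a) c = fl t xb / 2 := by rw [← hT] at *; linarith
  simpa [hc] using this
end
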